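/- arXiv:2501.08602 — 4 statements merged into one kernel-verified Lean document; each statement's English description precedes it below -/
import Mathlib

section
/- Let s ≥ 2 be an integer and set K_s^ev = ⌊√(s+1)⌋ − 1. Let A_1, A_2, A_3 be integers greater than 1 with gcd(A_1, A_2, A_3) = 1 and A_2 dividing A_1. If 2 < A_2·A_3/A_1 < 2 + 1/K_s^ev, then g(A_1, A_2, A_3; s) = g(A_2, A_3; x_s^even) + y_s^even·A_1. -/
open Finset

/-- Number of representations of `m` as `∑ i, a i * x i` with nonnegative integers `x i`
(for positive weights `a i`, every solution satisfies `x i ≤ m`). -/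
def repCount {k : ℕ} (a : Fin k → ℕ) (m : ℕ) : ℕ :=
  (Finset.univ.filter (fun x : Fin k → Fin (m + 1) => ∑ i, a i * (x i : ℕ) = m)).card

/-- Representation count extended to the integers (no representations of negative numbers). -/
def repCountZ {k : ℕ} (a : Fin k → ℕ) (m : ℤ) : ℕ :=
  if 0 ≤ m then repCount a m.toNat else 0

/-- The generalized Frobenius number `g(a; s)`: the largest integer having at most `s`
representations by the tuple `a`. -/
noncomputable def genFrob {k : ℕ} (a : Fin k → ℕ) (s : ℕ) : ℤ :=
  sSup {m : ℤ | repCountZ a m ≤ s}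

/-- The `n`-th triangular number `t n = n(n+1)/2`. -/
def t (n : ℕ) : ℕ := n * (n + 1) / 2

/-- `N_s^even = 6⌊√(s+1)⌋ - 6`. -/
def NEven (s : ℕ) : ℤ := 6 * (Nat.sqrt (s + 1) : ℤ) - 6

/-- `N_s^odd = 6⌊(√(4s+5) - 1)/2⌋ - 3`. -/
def NOdd (s : ℕ) : ℤ := 6 * (((Nat.sqrt (4 * s + 5) - 1) / 2 : ℕ) : ℤ) - 3

/-- `δ_s = 1` if `s ≥ ⌊√s⌋² + ⌊√s⌋`, and `0` otherwise. -/
def deltaS (s : ℕ) : ℤ := if Nat.sqrt s ^ 2 + Nat.sqrt s ≤ s then 1 else 0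

/-- `q_s = 2⌊√s⌋ + 2 + δ_s`. -/
def qS (s : ℕ) : ℤ := 2 * (Nat.sqrt s : ℤ) + 2 + deltaS s

/-- `c_s = s - ⌊√s⌋² - δ_s⌊√s⌋`. -/
def cS (s : ℕ) : ℤ := (s : ℤ) - (Nat.sqrt s : ℤ) ^ 2 - deltaS s * (Nat.sqrt s : ℤ)

/-- For `s = k(k+1) + i` with `0 ≤ i ≤ 2k+1`: `x_s^even`. -/
def xEvenN (k i : ℕ) : ℕ := if i ≤ k then i else i - k - 1

/-- For `s = k(k+1) + i` with `0 ≤ i ≤ 2k+1`: `y_s^even`. -/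
def yEvenN (k i : ℕ) : ℕ := if i ≤ k then 2 * (k - i) else 4 * k + 3 - 2 * i

/-- For `s = k(k+1) + i` with `0 ≤ i ≤ 2k+1`: `x_s^odd`. -/
def xOddN (k i : ℕ) : ℕ := if i ≤ k then 2 * i else 2 * (i - k) - 1

/-- For `s = k(k+1) + i` with `0 ≤ i ≤ 2k+1`: `y_s^odd`. -/
def yOddN (k i : ℕ) : ℕ := if i ≤ k then k - i else 2 * k + 1 - i

def cnt {k : ℕ} (a : Fin k → ℕ) (m : ℕ) : ℕ :=
  ((Fintype.piFinset fun _ : Fin k => range (m + 1)).filter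
    (fun x : Fin k → ℕ => ∑ i, a i * x i = m)).card

lemma repCount_eq_cnt {k : ℕ} (a : Fin k → ℕ) (m : ℕ) : repCount a m = cnt a m := by
  classical
  unfold repCount cnt
  refine Finset.card_nbij' (fun x => fun i => (x i : ℕ))
    (fun x => fun i => (⟨min (x i) m, by omega⟩ : Fin (m+1))) ?_ ?_ ?_ ?_
  · intro x hx
    simp only [mem_coe, mem_filter, mem_univ, true_and] at hx
    simp only [mem_coe, mem_filter, Fintype.mem_piFinset, mem_range]
    exact ⟨fun i => (x i).isLt, hx⟩
  · intro x hx
    simp only [mem_coe, mem_filter, Fintype.mem_piFinset, mem_range] at hx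
    simp only [mem_coe, mem_filter, mem_univ, true_and]
    calc ∑ i, a i * ((⟨min (x i) m, by omega⟩ : Fin (m+1)) : ℕ) = ∑ i, a i * x i := by
          refine Finset.sum_congr rfl fun i _ => ?_
          have := hx.1 i
          congr 1
          simp; omega
      _ = m := hx.2
  · intro x hx
    simp only [mem_coe, mem_filter, mem_univ, true_and] at hx
    funext i
    apply Fin.ext
    simp
    omega
  · intro x hx
    simp only [mem_coe, mem_filter, Fintype.mem_piFinset, mem_range] at hx
    funext i
    have := hx.1 i
    simp; omega

lemma cnt_nil (a : Fin 0 → ℕ) (m : ℕ) : cnt a m = if m = 0 then 1 else 0 := by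
  classical
  unfold cnt
  rcases eq_or_ne m 0 with rfl | hm
  · simp
  · rw [if_neg hm]
    rw [Finset.card_eq_zero, Finset.filter_eq_empty_iff]
    intro x _
    simp [eq_comm, hm]

lemma cnt_perm {k : ℕ} (a : Fin k → ℕ) (σ : Equiv.Perm (Fin k)) (m : ℕ) :
    cnt (a ∘ σ) m = cnt a m := by
  classical
  unfold cnt
  refine Finset.card_nbij' (fun x => x ∘ σ.symm) (fun x => x ∘ σ) ?_ ?_ ?_ ?_
  · intro x hx
    simp only [mem_coe, mem_filter, Fintype.mem_piFinset, mem_range] at hx ⊢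
    refine ⟨fun i => hx.1 _, ?_⟩
    rw [← hx.2]
    rw [← Equiv.sum_comp σ (fun j => a j * (x ∘ σ.symm) j)]
    simp
  · intro x hx
    simp only [mem_coe, mem_filter, Fintype.mem_piFinset, mem_range] at hx ⊢
    refine ⟨fun i => hx.1 _, ?_⟩
    rw [← hx.2]
    exact Equiv.sum_comp σ (fun j => a j * x j)
  · intro x _; funext i; simp
  · intro x _; funext i; simp

lemma cnt_cons {k : ℕ} (a0 : ℕ) (a : Fin k → ℕ) (ha0 : 1 ≤ a0) (ha : ∀ i, 1 ≤ a i) (n : ℕ) :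
    cnt (Matrix.vecCons a0 a) n =
      ∑ v ∈ range (n + 1), if a0 * v ≤ n then cnt a (n - a0 * v) else 0 := by
  classical
  unfold cnt
  rw [Finset.card_eq_sum_card_fiberwise (f := fun x : Fin (k+1) → ℕ => x 0)
      (t := range (n+1)) ?_]
  swap
  · intro x hx
    simp only [mem_coe, mem_filter, Fintype.mem_piFinset, mem_range] at hx
    simp only [mem_coe, mem_range]
    exact hx.1 0
  refine Finset.sum_congr rfl fun v hv => ?_
  by_cases hle : a0 * v ≤ n
  · rw [if_pos hle]
    refine Finset.card_nbij' (fun x => x ∘ Fin.succ) (fun y => Matrix.vecCons v y) ?_ ?_ ?_ ?_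
    · intro x hx
      simp only [mem_coe, mem_filter, Fintype.mem_piFinset, mem_range] at hx ⊢
      obtain ⟨⟨hmem, hsum⟩, hx0⟩ := hx
      rw [Fin.sum_univ_succ] at hsum
      simp only [Matrix.cons_val_zero, Matrix.cons_val_succ, hx0] at hsum
      have htail : ∑ j, a j * x j.succ = n - a0 * v := by omega
      constructor
      · intro j
        have h1 : a j * x j.succ ≤ ∑ j, a j * x j.succ :=
          Finset.single_le_sum (f := fun j => a j * x j.succ) (fun i _ => Nat.zero_le _) (mem_univ j)
        have h2 : x j.succ ≤ a j * x j.succ := Nat.le_mul_of_pos_left _ (ha j)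
        simp only [Function.comp]
        omega
      · exact htail
    · intro y hy
      simp only [mem_coe, mem_filter, Fintype.mem_piFinset, mem_range] at hy ⊢
      obtain ⟨hmem, hsum⟩ := hy
      refine ⟨⟨?_, ?_⟩, ?_⟩
      · intro j
        refine Fin.cases ?_ ?_ j
        · simp only [Matrix.cons_val_zero]
          have : v ≤ a0 * v := Nat.le_mul_of_pos_left _ ha0
          omega
        · intro jj
          simp only [Matrix.cons_val_succ]
          have := hmem jj
          omega
      · rw [Fin.sum_univ_succ]
        simp only [Matrix.cons_val_zero, Matrix.cons_val_succ]
        rw [hsum]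
        omega
      · simp
    · intro x hx
      simp only [mem_coe, mem_filter] at hx
      funext j
      refine Fin.cases ?_ ?_ j
      · simp [hx.2]
      · intro jj; simp
    · intro y hy
      funext j
      simp
  · rw [if_neg hle]
    rw [Finset.card_eq_zero, Finset.filter_eq_empty_iff]
    intro x hx
    simp only [mem_filter, Fintype.mem_piFinset, mem_range] at hx
    intro hx0
    obtain ⟨hmem, hsum⟩ := hx
    rw [Fin.sum_univ_succ] at hsum
    simp only [Matrix.cons_val_zero, Matrix.cons_val_succ, hx0] at hsum
    omega

lemma cnt_single (aa : ℕ) (ha : 1 ≤ aa) (m : ℕ) :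
    cnt ![aa] m = if aa ∣ m then 1 else 0 := by
  rw [show (![aa] : Fin 1 → ℕ) = Matrix.vecCons aa ![] from rfl]
  rw [cnt_cons aa ![] ha (fun i => i.elim0) m]
  have h1 : ∀ v ∈ range (m+1),
      (if aa * v ≤ m then cnt ![] (m - aa * v) else 0) = if aa * v = m then 1 else 0 := by
    intro v _
    rw [cnt_nil]
    split_ifs <;> omega
  rw [Finset.sum_congr rfl h1]
  rw [← Finset.sum_filter]
  rw [Finset.sum_const, smul_eq_mul, mul_one]
  by_cases hd : aa ∣ m
  · obtain ⟨w, rfl⟩ := hd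
    rw [if_pos ⟨w, rfl⟩]
    have : filter (fun v => aa * v = aa * w) (range (aa * w + 1)) = {w} := by
      ext v
      simp only [mem_filter, mem_range, mem_singleton]
      constructor
      · rintro ⟨_, h⟩
        exact Nat.eq_of_mul_eq_mul_left (by omega) h
      · intro h
        subst h
        have : v ≤ aa * v := Nat.le_mul_of_pos_left _ ha
        omega
    rw [this, Finset.card_singleton]
  · rw [if_neg hd]
    rw [Finset.card_eq_zero, Finset.filter_eq_empty_iff]
    intro v _
    exact fun h => hd ⟨v, h.symm⟩

lemma cnt_bqb (b q : ℕ) (hb : 1 ≤ b) (hq : 1 ≤ q) (m : ℕ) :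
    cnt ![b * q, b] m = if b ∣ m then m / (b * q) + 1 else 0 := by
  rw [show (![b*q, b] : Fin 2 → ℕ) = Matrix.vecCons (b*q) ![b] from rfl]
  rw [cnt_cons (b*q) ![b] (Nat.one_le_iff_ne_zero.2 (Nat.mul_ne_zero (by omega) (by omega))) (by intro i; fin_cases i <;> simp [hb]) m]
  have h1 : ∀ v ∈ range (m+1),
      (if b * q * v ≤ m then cnt ![b] (m - b * q * v) else 0)
        = if b * q * v ≤ m then (if b ∣ m - b * q * v then 1 else 0) else 0 := by
    intro v _
    split_ifs with h h2 h3 <;> first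
      | rfl
      | (rw [cnt_single b hb]; simp [h2])
      | (rw [cnt_single b hb]; simp only [h3, if_neg]; simp [h3])
  rw [Finset.sum_congr rfl h1]
  by_cases hd : b ∣ m
  · rw [if_pos hd]
    have h2 : ∀ v ∈ range (m+1),
        (if b * q * v ≤ m then (if b ∣ m - b * q * v then 1 else 0) else 0)
          = if b * q * v ≤ m then 1 else 0 := by
      intro v _
      split_ifs with h h2
      · rfl
      · exfalso; apply h2
        have : b ∣ b * q * v := ⟨q * v, by ring⟩
        exact (Nat.dvd_sub hd this)
      · rfl
    rw [Finset.sum_congr rfl h2]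
    rw [← Finset.sum_filter, Finset.sum_const, smul_eq_mul, mul_one]
    have : filter (fun v => b * q * v ≤ m) (range (m + 1)) = range (m / (b*q) + 1) := by
      ext v
      simp only [mem_filter, mem_range]
      rw [Nat.lt_succ_iff, Nat.lt_succ_iff, Nat.le_div_iff_mul_le (by positivity)]
      have hc : b * q * v = v * (b * q) := by ring
      constructor
      · rintro ⟨_, h⟩; omega
      · intro h
        have hvb : v ≤ v * (b * q) := Nat.le_mul_of_pos_right _ (by positivity)
        omega
    rw [this, Finset.card_range]
  · rw [if_neg hd]
    rw [Finset.sum_eq_zero]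
    intro v _
    split_ifs with h h2
    · exfalso
      apply hd
      have hdd : b ∣ b * q * v := ⟨q * v, by ring⟩
      have := Nat.dvd_add h2 hdd
      rwa [Nat.sub_add_cancel h] at this
    · rfl
    · rfl

lemma sum_prog (b : ℕ) (hb : 1 ≤ b) (h : ℕ → ℕ) (J : ℕ) :
    ∑ z ∈ range (b * J), (if b ∣ (z + 1) then h ((z + 1) / b - 1) else 0)
      = ∑ j ∈ range J, h j := by
  induction J with
  | zero => simp
  | succ J ih =>
    have hbJ : b * (J + 1) = b * J + b := by ring
    rw [hbJ, Finset.sum_range_add, ih, Finset.sum_range_succ]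
    congr 1
    rw [Finset.sum_eq_single (b - 1)]
    · have he : b * J + (b - 1) + 1 = b * (J + 1) := by omega
      have hd : b ∣ b * J + (b - 1) + 1 := by rw [he]; exact ⟨J + 1, rfl⟩
      rw [if_pos hd]
      congr 1
      rw [he, Nat.mul_div_cancel_left _ (by omega)]
      omega
    · intro i hi hne
      rw [if_neg]
      intro hd
      have h2 : b ∣ i + 1 :=
        (Nat.dvd_add_right (⟨J, rfl⟩ : b ∣ b * J)).mp (by rwa [← Nat.add_assoc])
      have h3 := Nat.le_of_dvd (by omega) h2
      simp only [mem_range] at hi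
      omega
    · intro hmem
      simp only [mem_range] at hmem
      omega

lemma exists_residue (b c M : ℕ) (hb : 2 ≤ b) (hco : Nat.Coprime c b) :
    ∃ z, z < b ∧ c * z ≡ M [MOD b] := by
  haveI : NeZero b := ⟨by omega⟩
  refine ⟨((c : ZMod b)⁻¹ * (M : ZMod b)).val, ZMod.val_lt _, ?_⟩
  rw [← ZMod.natCast_eq_natCast_iff]
  push_cast
  rw [ZMod.natCast_rightInverse _]
  rw [← mul_assoc, ZMod.coe_mul_inv_eq_one c hco, one_mul]

lemma genFrob_eq {k : ℕ} (a : Fin k → ℕ) (s : ℕ) (N : ℤ) (h1 : repCountZ a N ≤ s)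
    (h2 : ∀ m : ℤ, N < m → s < repCountZ a m) : genFrob a s = N := by
  have hub : ∀ m ∈ {m : ℤ | repCountZ a m ≤ s}, m ≤ N := by
    intro m hm
    by_contra h
    push_neg at h
    exact absurd hm (not_le.2 (h2 m h))
  apply le_antisymm
  · exact csSup_le ⟨N, h1⟩ hub
  · exact le_csSup ⟨N, hub⟩ h1

lemma cnt_bc (b c : ℕ) (hb : 1 ≤ b) (hc : 1 ≤ c) (m : ℕ) :
    cnt ![b, c] m = ((range (m + 1)).filter (fun w => b * w ≤ m ∧ c ∣ m - b * w)).card := by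
  rw [show (![b, c] : Fin 2 → ℕ) = Matrix.vecCons b ![c] from rfl]
  rw [cnt_cons b ![c] hb (by intro i; fin_cases i; simpa) m]
  rw [Finset.card_filter]
  refine Finset.sum_congr rfl fun v _ => ?_
  rw [cnt_single c hc]
  split_ifs with h1 h2 h3 h4 h5 <;> first | rfl | (exfalso; tauto)

lemma p2_le (b c X : ℕ) (hb : 2 ≤ b) (hc : 2 ≤ c) (hco : Nat.Coprime b c) :
    cnt ![b, c] ((X + 1) * (b * c) - b - c) ≤ X := by
  set G2 := (X + 1) * (b * c) - b - c with hG2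
  have hbc : b + c ≤ b * c := by nlinarith
  have hX1 : b * c ≤ (X + 1) * (b * c) := by nlinarith
  rw [cnt_bc b c (by omega) (by omega)]
  have hkey : ∀ w ∈ (range (G2 + 1)).filter (fun w => b * w ≤ G2 ∧ c ∣ G2 - b * w),
      w / c < X ∧ w = c * (w / c) + (c - 1) := by
    intro w hw
    simp only [mem_filter, mem_range] at hw
    obtain ⟨hwr, hbw, hdvd⟩ := hw
    -- c ∣ G2 + b
    have hd1 : c ∣ (X + 1) * (b * c) - c :=
      Nat.dvd_sub ⟨(X + 1) * b, by ring⟩ dvd_rfl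
    have he1 : G2 + b = (X + 1) * (b * c) - c := by omega
    have hd2 : c ∣ G2 + b := he1 ▸ hd1
    -- c ∣ b * (w+1)
    have he2 : (G2 + b) - (G2 - b * w) = b * (w + 1) := by
      have : b * (w + 1) = b * w + b := by ring
      omega
    have hd3 : c ∣ b * (w + 1) := he2 ▸ Nat.dvd_sub hd2 hdvd
    have hd4 : c ∣ w + 1 := (Nat.Coprime.dvd_of_dvd_mul_left (hco.symm) hd3)
    obtain ⟨j, hj⟩ := hd4
    have hj1 : 1 ≤ j := by
      rcases Nat.eq_zero_or_pos j with rfl | h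
      · omega
      · exact h
    have hcj : c * j = c * (j - 1) + c := by
      rcases j with _ | j'
      · omega
      · simp only [Nat.add_sub_cancel]; ring
    have hwval : w = c * (j - 1) + (c - 1) := by omega
    have hwdiv : w / c = j - 1 := by
      rw [hwval, Nat.mul_add_div (by omega)]
      rw [Nat.div_eq_of_lt (by omega)]
      omega
    -- j ≤ X
    have hbw1 : b * (w + 1) = (b * c) * j := by rw [hj]; ring
    have hlt : (b * c) * j < (b * c) * (X + 1) := by
      have h1 : b * w + b = (b * c) * j := by rw [← hbw1]; ring
      have h2 : (b * c) * (X + 1) = (X + 1) * (b * c) := by ring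
      omega
    have hjX : j < X + 1 := Nat.lt_of_mul_lt_mul_left hlt
    refine ⟨?_, ?_⟩
    · rw [hwdiv]; omega
    · rw [hwdiv]; exact hwval
  calc ((range (G2 + 1)).filter (fun w => b * w ≤ G2 ∧ c ∣ G2 - b * w)).card
      ≤ (range X).card := by
        apply Finset.card_le_card_of_injOn (fun w => w / c)
        · intro w hw
          simp only [mem_coe, mem_range]
          exact (hkey w hw).1
        · intro w1 h1 w2 h2 heq
          simp only at heq
          have e1 := (hkey w1 h1).2
          have e2 := (hkey w2 h2).2
          rw [e1, e2, heq]
    _ = X := Finset.card_range X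

lemma p2_gt (b c X : ℕ) (hb : 2 ≤ b) (hc : 2 ≤ c) (hco : Nat.Coprime b c) (m : ℕ)
    (hm : (X + 1) * (b * c) - b - c < m) : X < cnt ![b, c] m := by
  set G2 := (X + 1) * (b * c) - b - c with hG2
  have hbc : b + c ≤ b * c := by nlinarith
  have hX1 : b * c ≤ (X + 1) * (b * c) := by nlinarith
  obtain ⟨w, hwlt, hmod⟩ := exists_residue c b m hc hco
  have hbw1 : b * w ≤ b * (c - 1) := Nat.mul_le_mul_left b (by omega)
  have hbc1 : b * (c - 1) = b * c - b := by
    cases c with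
    | zero => omega
    | succ c' => simp [Nat.mul_succ]
  -- b * w ≤ m
  have hble : b * w ≤ m := by
    by_contra h
    push_neg at h
    have hdd : c ∣ b * w - m := (Nat.modEq_iff_dvd' (by omega)).mp hmod.symm
    have : c ≤ b * w - m := Nat.le_of_dvd (by omega) hdd
    omega
  have hdvdD : c ∣ m - b * w := (Nat.modEq_iff_dvd' hble).mp hmod
  -- X * (b*c) ≤ m - b * w
  have hDge : X * (b * c) ≤ m - b * w := by
    by_contra h
    push_neg at h
    obtain ⟨e, he⟩ := hdvdD
    have hm2 : m = b * w + c * e := by omega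
    have he2 : c * e < c * (X * b) := by
      have hxx : X * (b * c) = c * (X * b) := by ring
      omega
    have he3 : e < X * b := Nat.lt_of_mul_lt_mul_left he2
    have he5 : c * (e + 1) ≤ c * (X * b) := Nat.mul_le_mul_left c (by omega)
    have he6 : c * (e + 1) = c * e + c := by ring
    have hgoal : m ≤ (X + 1) * (b * c) - b - c := by
      have hx2 : (X + 1) * (b * c) = c * (X * b) + b * c := by ring
      omega
    omega
  -- now X + 1 distinct witnesses
  rw [cnt_bc b c (by omega) (by omega)]
  have hcard : (range (X + 1)).card ≤
      ((range (m + 1)).filter (fun w' => b * w' ≤ m ∧ c ∣ m - b * w')).card := by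
    apply Finset.card_le_card_of_injOn (fun j => w + j * c)
    · intro j hj
      simp only [mem_coe, mem_range] at hj
      have hjc : j * c ≤ X * c := Nat.mul_le_mul_right c (by omega)
      have hb1 : b * (w + j * c) = b * w + j * (b * c) := by ring
      have hb2 : j * (b * c) ≤ X * (b * c) := Nat.mul_le_mul_right (b * c) (by omega)
      have hble2 : b * (w + j * c) ≤ m := by omega
      simp only [mem_coe, mem_filter, mem_range]
      refine ⟨?_, hble2, ?_⟩
      · have : w + j * c ≤ b * (w + j * c) := Nat.le_mul_of_pos_left _ (by omega)
        omega
      · have he : m - b * (w + j * c) = (m - b * w) - j * (b * c) := by omega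
        rw [he]
        exact Nat.dvd_sub hdvdD ⟨j * b, by ring⟩
    · intro j1 h1 j2 h2 heq
      simp only at heq
      have : j1 * c = j2 * c := by omega
      exact Nat.eq_of_mul_eq_mul_right (by omega) this
  rw [Finset.card_range] at hcard
  omega

def tripleCnt (b q c n : ℕ) : ℕ :=
  ∑ z ∈ range (n + 1), (if c * z ≤ n ∧ b ∣ (n - c * z) then (n - c * z) / (b * q) + 1 else 0)

lemma cnt_triple_expr (b q c : ℕ) (hb : 1 ≤ b) (hq : 1 ≤ q) (hc : 1 ≤ c) (n : ℕ) :
    cnt ![c, b * q, b] n = tripleCnt b q c n := by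
  rw [show (![c, b * q, b] : Fin 3 → ℕ) = Matrix.vecCons c ![b * q, b] from rfl]
  rw [cnt_cons c ![b * q, b] hc (by
    intro i; fin_cases i
    · simpa using Nat.one_le_iff_ne_zero.2 (Nat.mul_ne_zero (by omega) (by omega))
    · simpa) n]
  unfold tripleCnt
  refine Finset.sum_congr rfl fun z _ => ?_
  rw [cnt_bqb b q hb hq]
  split_ifs <;> first | rfl | tauto

/-- upper-bound function -/

def ubf (X Y : ℕ) (j : ℕ) : ℕ :=
  if j < X then 2 * (X - j) + Y + 1 else if j = X then Y else Y - 2 * (j - X)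

lemma triple_upper (b q c r X Y T : ℕ) (hb : 2 ≤ b) (hq : 1 ≤ q) (hr : 1 ≤ r)
    (hcr : c = 2 * q + r) (hco : Nat.Coprime b c)
    (hXY : 1 ≤ X + Y) (hXr : X * r ≤ q) (hT1 : Y ≤ 2 * T + 2) (hT2 : 1 ≤ T → 2 * T + 1 ≤ Y) :
    tripleCnt b q c (b * (X * c + Y * q - 1) + c * (b - 1))
      ≤ ∑ j ∈ range (X + T + 1), ubf X Y j := by
  have hc : 3 ≤ c := by omega
  set M := X * c + Y * q - 1 with hM
  set N := b * M + c * (b - 1) with hN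
  have hM1 : M + 1 = X * c + Y * q := by
    have h1 : 1 ≤ X * c + Y * q := by
      rcases Nat.lt_or_ge 0 X with h | h
      · have : 1 * 1 ≤ X * c := Nat.mul_le_mul (by omega) (by omega)
        omega
      · have hY : 1 ≤ Y := by omega
        have : 1 * 1 ≤ Y * q := Nat.mul_le_mul (by omega) (by omega)
        omega
    omega
  have hNc : N + c = b * M + c * b := by
    have : c * (b - 1) + c = c * b := by
      cases b with
      | zero => omega
      | succ b' => simp [Nat.mul_succ]
    omega
  -- pointwise bound
  have hpt : ∀ z ∈ range (N + 1),
      (if c * z ≤ N ∧ b ∣ (N - c * z) then (N - c * z) / (b * q) + 1 else 0)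
        ≤ (if b ∣ (z + 1) then ubf X Y ((z + 1) / b - 1) else 0) := by
    intro z _
    by_cases hdz : b ∣ (z + 1)
    · rw [if_pos hdz]
      obtain ⟨j1, hj1⟩ := hdz
      have hj1pos : 1 ≤ j1 := by
        rcases Nat.eq_zero_or_pos j1 with rfl | h
        · omega
        · exact h
      set j := j1 - 1 with hjdef
      have hzval : z + 1 = b * (j + 1) := by rw [hj1]; congr 1; omega
      have hjdiv : (z + 1) / b - 1 = j := by
        rw [hzval, Nat.mul_div_cancel_left _ (show 0 < b by omega)]
        omega
      rw [hjdiv]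
      split_ifs with hcond
      · obtain ⟨hczn, hdvd⟩ := hcond
        -- N - c*z = b * (M - c*j)  and  c*z ≤ N ↔ c*j ≤ M
        have hcz : c * z + c = c * b * (j + 1) := by
          have h0 : c * (z + 1) = c * b * (j + 1) := by rw [hzval]; ring
          have h1 : c * (z + 1) = c * z + c := by ring
          omega
        have hexp : c * b * (j + 1) = b * (c * j) + c * b := by ring
        have hczN : c * j ≤ M := by
          -- from c*z ≤ N
          by_contra hcon
          push_neg at hcon
          have h3 : b * (c * j) ≥ b * (M + 1) := Nat.mul_le_mul_left b (by omega)
          have h4 : b * (M + 1) = b * M + b := by ring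
          omega
        have hNcz : N - c * z = b * (M - c * j) := by
          have h5 : b * (M - c * j) + b * (c * j) = b * M := by
            have : M - c * j + c * j = M := by omega
            calc b * (M - c * j) + b * (c * j) = b * ((M - c * j) + c * j) := by ring
              _ = b * M := by rw [this]
          omega
        rw [hNcz, Nat.mul_div_mul_left _ _ (show 0 < b by omega)]
        -- now compare (M - c*j)/q + 1 with ubf X Y j
        unfold ubf
        rcases Nat.lt_trichotomy j X with hjX | hjX | hjX
        · rw [if_pos hjX]
          set e := X - j with he
          have he1 : 1 ≤ e := by omega
          have heX : e ≤ X := by omega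
          have hXc : X * c = j * c + e * c := by
            have : X = j + e := by omega
            rw [this]; ring
          have hMcj : M - c * j = e * c + Y * q - 1 := by
            have h6 : c * j = j * c := by ring
            omega
          have her : e * r ≤ q := by
            calc e * r ≤ X * r := Nat.mul_le_mul_right r heX
              _ ≤ q := hXr
          have hlt : e * c + Y * q - 1 < (2 * e + Y + 1) * q := by
            have h7 : e * c = 2 * (e * q) + e * r := by rw [hcr]; ring
            have h8 : (2 * e + Y + 1) * q = 2 * (e * q) + Y * q + q := by ring
            omega
          have hdivle : (e * c + Y * q - 1) / q < 2 * e + Y + 1 :=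
            Nat.div_lt_of_lt_mul (by
              have hcm : q * (2 * e + Y + 1) = (2 * e + Y + 1) * q := by ring
              omega)
          rw [hMcj]
          omega
        · rw [if_neg (by omega), if_pos hjX]
          rcases Nat.eq_zero_or_pos Y with hY0 | hY1
          · -- Y = 0: condition c*j ≤ M is false, contradiction with hczN
            exfalso
            have hX1 : 1 ≤ X := by omega
            have hyq : Y * q = 0 := by rw [hY0]; ring
            have h30 : M + 1 = X * c := by omega
            have h31 : c * j = X * c := by rw [hjX]; ring
            omega
          · have hMcj : M - c * j = Y * q - 1 := by
              have : c * j = X * c := by rw [hjX]; ring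
              omega
            have hdivle : (Y * q - 1) / q < Y := Nat.div_lt_of_lt_mul (by
              have h20 : 1 * 1 ≤ Y * q := Nat.mul_le_mul (by omega) (by omega)
              have hcm : q * Y = Y * q := by ring
              omega)
            rw [hMcj]
            omega
        · rw [if_neg (by omega), if_neg (by omega)]
          set t := j - X with ht
          have ht1 : 1 ≤ t := by omega
          have hcj2 : c * j = X * c + t * c := by
            have : j = X + t := by omega
            rw [this]; ring
          have htc : t * c = 2 * (t * q) + t * r := by rw [hcr]; ring
          have htY : 2 * t + 1 ≤ Y := by
            by_contra hcon
            push_neg at hcon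
            -- 2t ≥ Y ⇒ t*c ≥ Y*q + t*r > Y*q - 1 ⇒ c*j > M
            have h9 : Y * q ≤ 2 * t * q := Nat.mul_le_mul_right q (by omega)
            have h10 : 2 * t * q = 2 * (t * q) := by ring
            have h11 : 1 ≤ t * r := Nat.one_le_iff_ne_zero.2 (Nat.mul_ne_zero (by omega) (by omega))
            omega
          have hMcj : M - c * j = (Y - 2 * t) * q - (t * r) - 1 := by
            have h12 : Y * q = (Y - 2 * t) * q + 2 * (t * q) := by
              have : Y = (Y - 2 * t) + 2 * t := by omega
              calc Y * q = ((Y - 2 * t) + 2 * t) * q := by rw [← this]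
                _ = (Y - 2 * t) * q + 2 * (t * q) := by ring
            omega
          have hdivle : ((Y - 2 * t) * q - (t * r) - 1) / q < Y - 2 * t :=
            Nat.div_lt_of_lt_mul (by
              have h13 : 1 * 1 ≤ (Y - 2 * t) * q := Nat.mul_le_mul (by omega) (by omega)
              have h14 : 1 ≤ t * r := Nat.one_le_iff_ne_zero.2 (Nat.mul_ne_zero (by omega) (by omega))
              have hcm : q * (Y - 2 * t) = (Y - 2 * t) * q := by ring
              omega)
          rw [hMcj]
          omega
      · exact Nat.zero_le _
    · rw [if_neg hdz]
      -- show the triple term is 0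
      rw [if_neg]
      rintro ⟨hczn, hdvd⟩
      apply hdz
      have hd1 : b ∣ N + c := ⟨M + c, by rw [hNc]; ring⟩
      have he : (N + c) - (N - c * z) = c * (z + 1) := by
        have h1 : c * (z + 1) = c * z + c := by ring
        omega
      have hd2 : b ∣ c * (z + 1) := he ▸ Nat.dvd_sub hd1 hdvd
      exact (Nat.Coprime.dvd_of_dvd_mul_left hco hd2)
  -- assemble
  have hXTN : X + T + 1 ≤ N + 2 := by
    have hXle : X * 1 ≤ X * c := Nat.mul_le_mul_left X (by omega)
    have hTle : T ≤ Y * q := by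
      rcases Nat.eq_zero_or_pos T with rfl | hT
      · omega
      · have h1 : 2 * T + 1 ≤ Y := hT2 hT
        have h2 : Y * 1 ≤ Y * q := Nat.mul_le_mul_left Y (by omega)
        omega
    have hMN : M ≤ N := by
      have : 1 * M ≤ b * M := Nat.mul_le_mul_right M (by omega)
      omega
    omega
  calc tripleCnt b q c N
      ≤ ∑ z ∈ range (N + 1), (if b ∣ (z + 1) then ubf X Y ((z + 1) / b - 1) else 0) :=
        Finset.sum_le_sum hpt
    _ ≤ ∑ z ∈ range (b * (N + 2)), (if b ∣ (z + 1) then ubf X Y ((z + 1) / b - 1) else 0) := by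
        apply Finset.sum_le_sum_of_subset
        apply Finset.range_subset_range.2
        have h1 : (N + 2) * 1 ≤ (N + 2) * b := Nat.mul_le_mul_left _ (by omega)
        have h2 : (N + 2) * b = b * (N + 2) := by ring
        omega
    _ = ∑ j ∈ range (N + 2), ubf X Y j := sum_prog b (by omega) _ _
    _ = ∑ j ∈ range (X + T + 1), ubf X Y j := by
        symm
        apply Finset.sum_subset (Finset.range_subset_range.2 hXTN)
        intro j hj hnj
        simp only [mem_range] at hj hnj
        push_neg at hnj
        unfold ubf
        rw [if_neg (by omega), if_neg (by omega)]
        omega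

def lbf (X Y : ℕ) (j : ℕ) : ℕ :=
  if j ≤ X then 2 * (X - j) + Y + 1 else Y - 2 * (j - X)

lemma triple_lower (b q c r X Y T n z0 : ℕ) (hb : 2 ≤ b) (hq : 1 ≤ q) (hr : 1 ≤ r)
    (hcr : c = 2 * q + r)
    (hXY : 1 ≤ X + Y) (hTr : T * r + 1 ≤ q) (hT2 : 1 ≤ T → 2 * T + 1 ≤ Y)
    (hz0 : z0 < b) (hmod : c * z0 ≡ n [MOD b])
    (hn : b * (X * c + Y * q - 1) + c * (b - 1) < n) :
    ∑ j ∈ range (X + T + 1), lbf X Y j ≤ tripleCnt b q c n := by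
  have hc : 3 ≤ c := by omega
  set M := X * c + Y * q - 1 with hM
  set N := b * M + c * (b - 1) with hN
  have hM1 : M + 1 = X * c + Y * q := by
    have h1 : 1 ≤ X * c + Y * q := by
      rcases Nat.lt_or_ge 0 X with h | h
      · have : 1 * 1 ≤ X * c := Nat.mul_le_mul (by omega) (by omega)
        omega
      · have hY : 1 ≤ Y := by omega
        have : 1 * 1 ≤ Y * q := Nat.mul_le_mul (by omega) (by omega)
        omega
    omega
  have hcb1 : c * z0 ≤ c * (b - 1) := Nat.mul_le_mul_left c (by omega)
  have hcz0n : c * z0 ≤ n := by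
    by_contra hcon
    push_neg at hcon
    have hd : b ∣ c * z0 - n := (Nat.modEq_iff_dvd' (by omega)).mp hmod.symm
    have : b ≤ c * z0 - n := Nat.le_of_dvd (by omega) hd
    omega
  have hdD : b ∣ n - c * z0 := (Nat.modEq_iff_dvd' hcz0n).mp hmod
  have hDge : b * (M + 1) ≤ n - c * z0 := by
    by_contra hcon
    push_neg at hcon
    obtain ⟨e, he⟩ := hdD
    have he1 : e ≤ M := by
      by_contra hcon2
      push_neg at hcon2
      have : b * (M + 1) ≤ b * e := Nat.mul_le_mul_left b (by omega)
      omega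
    have he2 : b * e ≤ b * M := Nat.mul_le_mul_left b he1
    omega
  have hXT : X + T + 1 ≤ M + 1 := by
    have hXc : X * 1 ≤ X * c := Nat.mul_le_mul_left X (by omega)
    rcases Nat.eq_zero_or_pos T with rfl | hT
    · rcases Nat.eq_zero_or_pos X with rfl | hX
      · have hY : 1 ≤ Y := by omega
        have : 1 * 1 ≤ Y * q := Nat.mul_le_mul (by omega) (by omega)
        omega
      · have : X * 2 ≤ X * c := Nat.mul_le_mul_left X (by omega)
        omega
    · have h1 : 2 * T + 1 ≤ Y := hT2 hT
      have h2 : Y * 1 ≤ Y * q := Nat.mul_le_mul_left Y (by omega)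
      omega
  -- pointwise bound
  have hpt : ∀ j ∈ range (X + T + 1), lbf X Y j ≤
      (if c * (z0 + j * b) ≤ n ∧ b ∣ (n - c * (z0 + j * b))
        then (n - c * (z0 + j * b)) / (b * q) + 1 else 0) := by
    intro j hj
    simp only [mem_range] at hj
    have hcz : c * (z0 + j * b) = c * z0 + b * (c * j) := by ring
    have hcjle : c * j ≤ M + 1 := by
      rcases le_or_gt j X with hjX | hjX
      · have h1 : c * j ≤ c * X := Nat.mul_le_mul_left c hjX
        have h2 : c * X = X * c := by ring
        omega
      · set t := j - X with ht
        have ht1 : 1 ≤ t := by omega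
        have ht2 : t ≤ T := by omega
        have htY : 2 * t + 1 ≤ Y := by
          have := hT2 (by omega)
          omega
        have htr : t * r ≤ T * r := Nat.mul_le_mul_right r ht2
        have hcj : c * j = c * X + 2 * (t * q) + t * r := by
          have : j = X + t := by omega
          rw [this, hcr]; ring
        have h2q : 2 * (t * q) ≤ (Y - 1) * q := by
          have : (2 * t) * q ≤ (Y - 1) * q := Nat.mul_le_mul_right q (by omega)
          have h3 : (2 * t) * q = 2 * (t * q) := by ring
          omega
        have hYq : (Y - 1) * q + q = Y * q := by
          have : Y = (Y - 1) + 1 := by omega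
          calc (Y - 1) * q + q = ((Y - 1) + 1) * q := by ring
            _ = Y * q := by rw [← this]
        have hcX : c * X = X * c := by ring
        omega
    have hble : b * (c * j) ≤ b * (M + 1) := Nat.mul_le_mul_left b hcjle
    have hcond1 : c * (z0 + j * b) ≤ n := by omega
    have hterm : n - c * (z0 + j * b) = (n - c * z0) - b * (c * j) := by omega
    have hdvd2 : b ∣ n - c * (z0 + j * b) := by
      rw [hterm]
      obtain ⟨e, he⟩ := hdD
      rw [he]
      exact Nat.dvd_sub ⟨e, rfl⟩ ⟨c * j, rfl⟩
    rw [if_pos ⟨hcond1, hdvd2⟩]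
    -- lower bound on the quotient
    have hbq : 0 < b * q := by positivity
    rcases le_or_gt j X with hjX | hjX
    · have hlb : (b * q) * (2 * (X - j) + Y) ≤ n - c * (z0 + j * b) := by
        have h1 : (M + 1) - c * j ≥ (X - j) * c + Y * q := by
          have h2 : X * c = j * c + (X - j) * c := by
            have : X = j + (X - j) := by omega
            calc X * c = (j + (X - j)) * c := by rw [← this]
              _ = j * c + (X - j) * c := by ring
          have h3 : c * j = j * c := by ring
          omega
        have h4 : (X - j) * c = 2 * ((X - j) * q) + (X - j) * r := by rw [hcr]; ring
        have h5 : (b * q) * (2 * (X - j) + Y) = b * (2 * ((X - j) * q) + Y * q) := by ring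
        have h6 : b * (2 * ((X - j) * q) + Y * q) ≤ b * ((M + 1) - c * j) := by
          apply Nat.mul_le_mul_left
          omega
        have h7 : b * ((M + 1) - c * j) = b * (M + 1) - b * (c * j) := by
          have : (M + 1) - c * j + c * j = M + 1 := by omega
          have h8 : b * ((M + 1) - c * j) + b * (c * j) = b * (M + 1) := by
            calc b * ((M + 1) - c * j) + b * (c * j) = b * (((M + 1) - c * j) + c * j) := by
                  ring
              _ = b * (M + 1) := by rw [this]
          omega
        omega
      have hdiv : 2 * (X - j) + Y ≤ (n - c * (z0 + j * b)) / (b * q) := by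
        rw [Nat.le_div_iff_mul_le hbq]
        have : (2 * (X - j) + Y) * (b * q) = (b * q) * (2 * (X - j) + Y) := by ring
        omega
      unfold lbf
      rw [if_pos hjX]
      omega
    · set t := j - X with ht
      have ht1 : 1 ≤ t := by omega
      have ht2 : t ≤ T := by omega
      have htY : 2 * t + 1 ≤ Y := by
        have := hT2 (by omega)
        omega
      have htr : t * r ≤ T * r := Nat.mul_le_mul_right r ht2
      have hlb : (b * q) * (Y - 2 * t - 1) ≤ n - c * (z0 + j * b) := by
        have h1 : c * j = X * c + 2 * (t * q) + t * r := by
          have : j = X + t := by omega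
          rw [this, hcr]; ring
        have h2 : (M + 1) - c * j = Y * q - 2 * (t * q) - t * r := by omega
        have h3 : Y * q = (Y - 2 * t) * q + 2 * (t * q) := by
          have : Y = (Y - 2 * t) + 2 * t := by omega
          calc Y * q = ((Y - 2 * t) + 2 * t) * q := by rw [← this]
            _ = (Y - 2 * t) * q + 2 * (t * q) := by ring
        have h4 : (Y - 2 * t) * q = (Y - 2 * t - 1) * q + q := by
          have : (Y - 2 * t) = (Y - 2 * t - 1) + 1 := by omega
          calc (Y - 2 * t) * q = ((Y - 2 * t - 1) + 1) * q := by rw [← this]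
            _ = (Y - 2 * t - 1) * q + q := by ring
        have h5 : (b * q) * (Y - 2 * t - 1) = b * ((Y - 2 * t - 1) * q) := by ring
        have h6 : b * ((Y - 2 * t - 1) * q) ≤ b * ((M + 1) - c * j) := by
          apply Nat.mul_le_mul_left
          omega
        have h7 : b * ((M + 1) - c * j) = b * (M + 1) - b * (c * j) := by
          have h9 : (M + 1) - c * j + c * j = M + 1 := by omega
          have h8 : b * ((M + 1) - c * j) + b * (c * j) = b * (M + 1) := by
            calc b * ((M + 1) - c * j) + b * (c * j) = b * (((M + 1) - c * j) + c * j) := by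
                  ring
              _ = b * (M + 1) := by rw [h9]
          omega
        omega
      have hdiv : Y - 2 * t - 1 ≤ (n - c * (z0 + j * b)) / (b * q) := by
        rw [Nat.le_div_iff_mul_le hbq]
        have : (Y - 2 * t - 1) * (b * q) = (b * q) * (Y - 2 * t - 1) := by ring
        omega
      unfold lbf
      rw [if_neg (by omega)]
      omega
  -- assemble
  have hsub : (range (X + T + 1)).image (fun j => z0 + j * b) ⊆ range (n + 1) := by
    intro z hz
    simp only [mem_image, mem_range] at hz ⊢
    obtain ⟨j, hj, rfl⟩ := hz
    have h1 : j * b ≤ (X + T) * b := Nat.mul_le_mul_right b (by omega)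
    have h2 : (X + T + 1) * b ≤ (M + 1) * b := Nat.mul_le_mul_right b hXT
    have h3 : (M + 1) * b = b * (M + 1) := by ring
    have h4 : (X + T + 1) * b = (X + T) * b + b := by ring
    omega
  calc ∑ j ∈ range (X + T + 1), lbf X Y j
      ≤ ∑ j ∈ range (X + T + 1),
          (if c * (z0 + j * b) ≤ n ∧ b ∣ (n - c * (z0 + j * b))
            then (n - c * (z0 + j * b)) / (b * q) + 1 else 0) := Finset.sum_le_sum hpt
    _ = ∑ z ∈ (range (X + T + 1)).image (fun j => z0 + j * b),
          (if c * z ≤ n ∧ b ∣ (n - c * z) then (n - c * z) / (b * q) + 1 else 0) := by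
        rw [Finset.sum_image]
        intro j1 _ j2 _ heq
        have : j1 * b = j2 * b := by simp only at heq; omega
        exact Nat.eq_of_mul_eq_mul_right (by omega) this
    _ ≤ tripleCnt b q c n := Finset.sum_le_sum_of_subset hsub

lemma sumlin (C n : ℕ) : ∑ j ∈ range n, (2 * j + C) = n * (n - 1) + n * C := by
  induction n with
  | zero => simp
  | succ m ih =>
    rw [Finset.sum_range_succ, ih]
    cases m with
    | zero => simp
    | succ m' =>
      simp only [Nat.add_sub_cancel]
      ring

lemma sumrev (m : ℕ) : ∑ t ∈ range m, (2 * m - 2 * t) = m * (m + 1) := by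
  have h1 : ∑ t ∈ range m, (2 * m - 2 * t) = ∑ t ∈ range m, (2 * t + 2) := by
    rw [← Finset.sum_range_reflect (fun t => 2 * t + 2) m]
    refine Finset.sum_congr rfl fun t ht => ?_
    simp only [mem_range] at ht
    omega
  rw [h1, sumlin]
  cases m with
  | zero => simp
  | succ m' => simp only [Nat.add_sub_cancel]; ring

lemma sumrev2 (g : ℕ) : ∑ t ∈ range g, (2 * g - 2 * t - 1) = g * g := by
  have h1 : ∑ t ∈ range g, (2 * g - 2 * t - 1) = ∑ t ∈ range g, (2 * t + 1) := by
    rw [← Finset.sum_range_reflect (fun t => 2 * t + 1) g]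
    refine Finset.sum_congr rfl fun t ht => ?_
    simp only [mem_range] at ht
    omega
  rw [h1, sumlin]
  cases g with
  | zero => simp
  | succ g' => simp only [Nat.add_sub_cancel]; ring

lemma sum_ub_head (X Y : ℕ) : ∑ j ∈ range (X + 1), ubf X Y j = X * X + 2 * X + X * Y + Y := by
  rw [Finset.sum_range_succ]
  have h0 : ubf X Y X = Y := by unfold ubf; simp
  have h1 : ∑ j ∈ range X, ubf X Y j = ∑ j ∈ range X, (2 * (X - j) + Y + 1) := by
    refine Finset.sum_congr rfl fun j hj => ?_
    simp only [mem_range] at hj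
    unfold ubf
    rw [if_pos hj]
  have h2 : ∑ j ∈ range X, (2 * (X - j) + Y + 1) = ∑ j ∈ range X, (2 * j + (Y + 3)) := by
    rw [← Finset.sum_range_reflect (fun j => 2 * j + (Y + 3)) X]
    refine Finset.sum_congr rfl fun j hj => ?_
    simp only [mem_range] at hj
    omega
  rw [h0, h1, h2, sumlin]
  cases X with
  | zero => simp
  | succ X' => simp only [Nat.add_sub_cancel]; ring

lemma sum_ub_tail (X Y T : ℕ) :
    ∑ j ∈ range (X + T + 1), ubf X Y j
      = (X * X + 2 * X + X * Y + Y) + ∑ t ∈ range T, (Y - 2 * (t + 1)) := by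
  have h0 : X + T + 1 = (X + 1) + T := by omega
  rw [h0, Finset.sum_range_add, sum_ub_head]
  congr 1
  refine Finset.sum_congr rfl fun t _ => ?_
  unfold ubf
  rw [if_neg (by omega), if_neg (by omega)]
  congr 1
  omega

lemma sum_ub_case1 (i h : ℕ) :
    ∑ j ∈ range (i + (h - 1) + 1), ubf i (2 * h) j = (i + h) * (i + h + 1) + i := by
  rw [sum_ub_tail]
  have h1 : ∑ t ∈ range (h - 1), (2 * h - 2 * (t + 1)) =
      ∑ t ∈ range (h - 1), (2 * (h - 1) - 2 * t) := by
    refine Finset.sum_congr rfl fun t ht => ?_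
    simp only [mem_range] at ht
    omega
  rw [h1, sumrev]
  cases h with
  | zero => simp; ring
  | succ h' =>
    simp only [Nat.add_sub_cancel]
    ring

lemma sum_ub_case2 (u g : ℕ) :
    ∑ j ∈ range (u + g + 1), ubf u (2 * g + 1) j
      = (u + g) * (u + g + 1) + ((u + g) + 1 + u) := by
  rw [sum_ub_tail]
  have h1 : ∑ t ∈ range g, (2 * g + 1 - 2 * (t + 1)) =
      ∑ t ∈ range g, (2 * g - 2 * t - 1) := by
    refine Finset.sum_congr rfl fun t ht => ?_
    simp only [mem_range] at ht
    omega
  rw [h1, sumrev2]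
  ring

lemma sum_lb (X Y T : ℕ) :
    ∑ j ∈ range (X + T + 1), lbf X Y j = (∑ j ∈ range (X + T + 1), ubf X Y j) + 1 := by
  have hpt : ∀ j, lbf X Y j = ubf X Y j + (if j = X then 1 else 0) := by
    intro j
    unfold lbf ubf
    split_ifs <;> omega
  calc ∑ j ∈ range (X + T + 1), lbf X Y j
      = ∑ j ∈ range (X + T + 1), (ubf X Y j + (if j = X then 1 else 0)) :=
        Finset.sum_congr rfl fun j _ => hpt j
    _ = (∑ j ∈ range (X + T + 1), ubf X Y j) + ∑ j ∈ range (X + T + 1), (if j = X then 1 else 0) :=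
        Finset.sum_add_distrib
    _ = (∑ j ∈ range (X + T + 1), ubf X Y j) + 1 := by
        congr 1
        rw [Finset.sum_ite_eq' (range (X + T + 1)) X (fun _ => 1)]
        rw [if_pos (by simp)]

lemma sqrt_eq_of (n v : ℕ) (h1 : v * v ≤ n) (h2 : n < (v + 1) * (v + 1)) : Nat.sqrt n = v := by
  have ha : v ≤ Nat.sqrt n := Nat.le_sqrt.mpr h1
  have hb : Nat.sqrt n < v + 1 := Nat.sqrt_lt.mpr h2
  omega

lemma genFrob_pair (b c X : ℕ) (hb : 2 ≤ b) (hc : 2 ≤ c) (hco : Nat.Coprime b c) :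
    genFrob ![b, c] X = (((X + 1) * (b * c) - b - c : ℕ) : ℤ) := by
  apply genFrob_eq
  · rw [repCountZ, if_pos (Int.natCast_nonneg _)]
    simp only [Int.toNat_natCast]
    rw [repCount_eq_cnt]
    exact p2_le b c X hb hc hco
  · intro m hm
    have hm0 : 0 ≤ m := le_trans (Int.natCast_nonneg _) (le_of_lt hm)
    rw [repCountZ, if_pos hm0, repCount_eq_cnt]
    exact p2_gt b c X hb hc hco m.toNat (by omega)

lemma genFrob_triple (b q c r X Y T s : ℕ) (hb : 2 ≤ b) (hq : 1 ≤ q) (hr : 1 ≤ r)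
    (hcr : c = 2 * q + r) (hco : Nat.Coprime b c)
    (hXY : 1 ≤ X + Y) (hXr : X * r ≤ q) (hTr : T * r + 1 ≤ q)
    (hT1 : Y ≤ 2 * T + 2) (hT2 : 1 ≤ T → 2 * T + 1 ≤ Y)
    (hsum : ∑ j ∈ range (X + T + 1), ubf X Y j = s) :
    genFrob ![b * q, b, c] s = ((b * (X * c + Y * q - 1) + c * (b - 1) : ℕ) : ℤ) := by
  have hc : 3 ≤ c := by omega
  have hrep : ∀ n : ℕ, repCount ![b * q, b, c] n = tripleCnt b q c n := by
    intro n
    rw [repCount_eq_cnt]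
    have hperm : (![b * q, b, c] ∘ ⇑(finRotate 3).symm) = ![c, b * q, b] := by
      funext i; fin_cases i <;> rfl
    rw [← cnt_perm ![b * q, b, c] (finRotate 3).symm n, hperm,
      cnt_triple_expr b q c (by omega) hq (by omega) n]
  apply genFrob_eq
  · rw [repCountZ, if_pos (Int.natCast_nonneg _)]
    simp only [Int.toNat_natCast]
    rw [hrep, ← hsum]
    exact triple_upper b q c r X Y T hb hq hr hcr hco hXY hXr hT1 hT2
  · intro m hm
    have hm0 : 0 ≤ m := le_trans (Int.natCast_nonneg _) (le_of_lt hm)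
    rw [repCountZ, if_pos hm0, hrep]
    have hmN : b * (X * c + Y * q - 1) + c * (b - 1) < m.toNat := by omega
    obtain ⟨z0, hz0, hmod⟩ := exists_residue b c m.toNat hb hco.symm
    have hlow := triple_lower b q c r X Y T m.toNat z0 hb hq hr hcr hXY hTr hT2 hz0 hmod hmN
    rw [sum_lb, hsum] at hlow
    omega

lemma final_eq (b c q X Y : ℕ) (hb : 2 ≤ b) (hc : 3 ≤ c) (hq : 1 ≤ q) (hXY : 1 ≤ X + Y) :
    b * (X * c + Y * q - 1) + c * (b - 1) = ((X + 1) * (b * c) - b - c) + Y * (b * q) := by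
  have hM1 : 1 ≤ X * c + Y * q := by
    rcases Nat.eq_zero_or_pos X with rfl | hX
    · have hY : 1 ≤ Y := by omega
      have : 1 * 1 ≤ Y * q := Nat.mul_le_mul (by omega) (by omega)
      omega
    · have : 1 * 1 ≤ X * c := Nat.mul_le_mul (by omega) (by omega)
      omega
  have f2 : b * (X * c + Y * q) = X * (b * c) + Y * (b * q) := by ring
  have f6 : b * (X * c + Y * q - 1) + b = b * (X * c + Y * q) := by
    have h0 : (X * c + Y * q - 1) + 1 = X * c + Y * q := by omega
    calc b * (X * c + Y * q - 1) + b = b * ((X * c + Y * q - 1) + 1) := by ring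
      _ = b * (X * c + Y * q) := by rw [h0]
  have f4 : c * (b - 1) + c = b * c := by
    cases b with
    | zero => omega
    | succ b' => simp [Nat.mul_succ]; ring
  have f3 : b + c ≤ b * c := by nlinarith
  have f3' : b * c ≤ (X + 1) * (b * c) := by nlinarith
  have f5 : (X + 1) * (b * c) = X * (b * c) + b * c := by ring
  omega

/-- for `s ≥ 2` written as `s = k(k+1) + i`, `K_s^ev = ⌊√(s+1)⌋ - 1`, and
`A₁, A₂, A₃ > 1` with `gcd(A₁,A₂,A₃) = 1`, `A₂ ∣ A₁` and `2 < A₂A₃/A₁ < 2 + 1/K_s^ev`, one has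
`g(A₁, A₂, A₃; s) = g(A₂, A₃; x_s^even) + y_s^even·A₁`. -/
theorem stmt_16 (s : ℕ) (hs : 2 ≤ s) (k i : ℕ) (hi : i ≤ 2 * k + 1)
    (hdecomp : s = k * (k + 1) + i)
    (A1 A2 A3 : ℕ) (h1 : 1 < A1) (h2 : 1 < A2) (h3 : 1 < A3)
    (hgcd : Nat.gcd A1 (Nat.gcd A2 A3) = 1) (hdvd : A2 ∣ A1)
    (hlow : (2 : ℚ) < ((A2 * A3 : ℕ) : ℚ) / (A1 : ℚ))
    (hhigh : ((A2 * A3 : ℕ) : ℚ) / (A1 : ℚ) < 2 + 1 / ((Nat.sqrt (s + 1) - 1 : ℕ) : ℚ)) :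
    genFrob ![A1, A2, A3] s =
      genFrob ![A2, A3] (xEvenN k i) + ((yEvenN k i * A1 : ℕ) : ℤ) := by
  obtain ⟨q, hA1⟩ := hdvd
  subst hA1
  have hq1 : 1 ≤ q := by
    rcases Nat.eq_zero_or_pos q with rfl | h
    · simp at h1
    · exact h
  have hco : Nat.Coprime A2 A3 := by
    have hd : Nat.gcd A2 A3 ∣ Nat.gcd (A2 * q) (Nat.gcd A2 A3) :=
      Nat.dvd_gcd (dvd_trans (Nat.gcd_dvd_left _ _) ⟨q, rfl⟩) dvd_rfl
    rw [hgcd] at hd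
    exact Nat.dvd_one.mp hd
  have hb0 : (0 : ℚ) < (A2 : ℚ) := by exact_mod_cast (by omega : 0 < A2)
  have hq0 : (0 : ℚ) < (q : ℚ) := by exact_mod_cast hq1
  have hratio : ((A2 * A3 : ℕ) : ℚ) / ((A2 * q : ℕ) : ℚ) = (A3 : ℚ) / (q : ℚ) := by
    push_cast
    rw [mul_div_mul_left _ _ (ne_of_gt hb0)]
  rw [hratio] at hlow hhigh
  have h2q : 2 * q < A3 := by
    have h := (lt_div_iff₀ hq0).mp hlow
    exact_mod_cast h
  set r := A3 - 2 * q with hrdef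
  have hr1 : 1 ≤ r := by omega
  have hcr : A3 = 2 * q + r := by omega
  by_cases hK0 : Nat.sqrt (s + 1) - 1 = 0
  · exfalso
    rw [hK0] at hhigh
    norm_num at hhigh
    linarith
  · set K := Nat.sqrt (s + 1) - 1 with hKdef
    have hK1 : 1 ≤ K := by omega
    have hK0Q : (0 : ℚ) < (K : ℚ) := by exact_mod_cast hK1
    have hstep : (A3 : ℚ) * K < 2 * q * K + q := by
      have h2 : (A3 : ℚ) < (2 + 1 / K) * q := by
        rw [div_lt_iff₀ hq0] at hhigh
        exact hhigh
      calc (A3 : ℚ) * K < ((2 + 1 / K) * q) * K := by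
            exact mul_lt_mul_of_pos_right h2 hK0Q
        _ = 2 * q * K + q := by field_simp
    have hNat : A3 * K < 2 * q * K + q := by exact_mod_cast hstep
    have hKr : K * r + 1 ≤ q := by
      have hh1 : A3 * K = 2 * q * K + r * K := by rw [hcr]; ring
      have hcomm : K * r = r * K := by ring
      omega
    have hk1 : 1 ≤ k := by
      rcases Nat.eq_zero_or_pos k with rfl | h
      · simp at hdecomp; omega
      · exact h
    have hkk : k * (k + 1) = k * k + k := by ring
    have hk2 : (k + 1) * (k + 1) = k * k + 2 * k + 1 := by ring
    have hk3 : (k + 2) * (k + 2) = k * k + 4 * k + 4 := by ring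
    rcases le_or_gt i k with hik | hik
    · -- case i ≤ k
      set hh := k - i with hhdef
      have hXv : xEvenN k i = i := if_pos hik
      have hYv : yEvenN k i = 2 * hh := by unfold yEvenN; rw [if_pos hik]
      have hiK : i ≤ K ∧ hh - 1 ≤ K := by
        rcases Nat.lt_or_ge i k with hilt | hige
        · have hsq : Nat.sqrt (s + 1) = k := by
            apply sqrt_eq_of
            · omega
            · have e : (k + 1) * (k + 1) = k * (k + 1) + k + 1 := by ring
              omega
          omega
        · have hieq : i = k := by omega
          have hsq : Nat.sqrt (s + 1) = k + 1 := by
            apply sqrt_eq_of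
            · have e : (k + 1) * (k + 1) = k * (k + 1) + k + 1 := by ring
              omega
            · have e : (k + 1 + 1) * (k + 1 + 1) = k * (k + 1) + 3 * k + 4 := by ring
              omega
          omega
      have hXr : i * r ≤ q := by
        have := Nat.mul_le_mul_right r hiK.1
        omega
      have hTr : (hh - 1) * r + 1 ≤ q := by
        have := Nat.mul_le_mul_right r hiK.2
        omega
      have hXY : 1 ≤ i + 2 * hh := by omega
      have hsum : ∑ j ∈ Finset.range (i + (hh - 1) + 1), ubf i (2 * hh) j = s := by
        rw [sum_ub_case1 i hh]
        have hih : i + hh = k := by omega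
        rw [hih]
        omega
      rw [hXv, hYv]
      rw [genFrob_pair A2 A3 i (by omega) (by omega) hco]
      rw [genFrob_triple A2 q A3 r i (2 * hh) (hh - 1) s (by omega) hq1 hr1 hcr hco
        hXY hXr hTr (by omega) (by omega) hsum]
      exact_mod_cast final_eq A2 A3 q i (2 * hh) (by omega) (by omega) hq1 (by omega)
    · -- case k < i
      set u := i - k - 1 with hudef
      set g := 2 * k + 1 - i with hgdef
      have hXv : xEvenN k i = u := by unfold xEvenN; rw [if_neg (by omega)]
      have hYv : yEvenN k i = 2 * g + 1 := by unfold yEvenN; rw [if_neg (by omega)]; omega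
      have hsq : Nat.sqrt (s + 1) = k + 1 := by
        apply sqrt_eq_of
        · have e : (k + 1) * (k + 1) = k * (k + 1) + k + 1 := by ring
          omega
        · have e : (k + 1 + 1) * (k + 1 + 1) = k * (k + 1) + 3 * k + 4 := by ring
          omega
      have huK : u ≤ K := by omega
      have hgK : g ≤ K := by omega
      have hXr : u * r ≤ q := by
        have := Nat.mul_le_mul_right r huK
        omega
      have hTr : g * r + 1 ≤ q := by
        have := Nat.mul_le_mul_right r hgK
        omega
      have hsum : ∑ j ∈ Finset.range (u + g + 1), ubf u (2 * g + 1) j = s := by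
        rw [sum_ub_case2 u g]
        have hug : u + g = k := by omega
        rw [hug]
        omega
      rw [hXv, hYv]
      rw [genFrob_pair A2 A3 u (by omega) (by omega) hco]
      rw [genFrob_triple A2 q A3 r u (2 * g + 1) g s (by omega) hq1 hr1 hcr hco
        (by omega) hXr hTr (by omega) (by omega) hsum]
      exact_mod_cast final_eq A2 A3 q u (2 * g + 1) (by omega) (by omega) hq1 (by omega)
end

section
/- Let s ≥ 2 be an integer and set K_s^od = ⌊(√(4s+5) − 1)/2⌋. Let A_1, A_2, A_3 be integers greater than 1 with gcd(A_1, A_2, A_3) = 1 and A_2 dividing A_1. If 1/2 < A_2·A_3/A_1 < K_s^od/(2·K_s^od − 1), then g(A_1, A_2, A_3; s) = g(A_2, A_3; x_s^odd) + y_s^odd·A_1. -/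
open Finset

-- ===== auxiliary development =====
section Aux

lemma repCount_three (p q r m : ℕ) :
    repCount ![p, q, r] m =
      ((range (m+1) ×ˢ (range (m+1) ×ˢ range (m+1))).filter
        (fun z : ℕ × ℕ × ℕ => p * z.1 + q * z.2.1 + r * z.2.2 = m)).card := by
  classical
  apply Finset.card_bij (fun x _ => ((x 0 : ℕ), (x 1 : ℕ), (x 2 : ℕ)))
  · intro x hx
    simp only [mem_filter, mem_univ, true_and] at hx
    simp only [mem_filter, mem_product, mem_range]
    refine ⟨⟨(x 0).is_lt, (x 1).is_lt, (x 2).is_lt⟩, ?_⟩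
    rw [Fin.sum_univ_three] at hx
    simpa using hx
  · intro x hx y hy hxy
    simp only [Prod.mk.injEq] at hxy
    funext j
    fin_cases j <;> exact Fin.ext (by tauto)
  · rintro ⟨z1, z2, z3⟩ hz
    simp only [mem_filter, mem_product, mem_range] at hz
    obtain ⟨⟨h1, h2, h3⟩, hsum⟩ := hz
    refine ⟨![⟨z1, h1⟩, ⟨z2, h2⟩, ⟨z3, h3⟩], ?_, rfl⟩
    simp only [mem_filter, mem_univ, true_and, Fin.sum_univ_three]
    simpa using hsum

lemma repCount_two (q r m : ℕ) :
    repCount ![q, r] m =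
      ((range (m+1) ×ˢ range (m+1)).filter
        (fun z : ℕ × ℕ => q * z.1 + r * z.2 = m)).card := by
  classical
  apply Finset.card_bij (fun x _ => ((x 0 : ℕ), (x 1 : ℕ)))
  · intro x hx
    simp only [mem_filter, mem_univ, true_and] at hx
    simp only [mem_filter, mem_product, mem_range]
    refine ⟨⟨(x 0).is_lt, (x 1).is_lt⟩, ?_⟩
    rw [Fin.sum_univ_two] at hx
    simpa using hx
  · intro x hx y hy hxy
    simp only [Prod.mk.injEq] at hxy
    funext j
    fin_cases j <;> exact Fin.ext (by tauto)
  · rintro ⟨z1, z2⟩ hz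
    simp only [mem_filter, mem_product, mem_range] at hz
    obtain ⟨⟨h1, h2⟩, hsum⟩ := hz
    refine ⟨![⟨z1, h1⟩, ⟨z2, h2⟩], ?_, rfl⟩
    simp only [mem_filter, mem_univ, true_and, Fin.sum_univ_two]
    simpa using hsum

lemma card_triple_eq (a A2 A3 n ρ : ℕ)
    (hdvd : A2 ∣ a) (hcop : Nat.gcd A3 A2 = 1) (h2 : 0 < A2) (h3 : 0 < A3)
    (hρ : ρ < A2) (hρn : A3 * ρ ≡ n [MOD A2]) :
    ((range (n+1) ×ˢ (range (n+1) ×ˢ range (n+1))).filter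
        (fun z : ℕ × ℕ × ℕ => a * z.1 + A2 * z.2.1 + A3 * z.2.2 = n)).card =
      ((range (n+1) ×ˢ range (n+1)).filter
        (fun w : ℕ × ℕ => a * w.1 + A2 * A3 * w.2 + A3 * ρ ≤ n)).card := by
  classical
  obtain ⟨α, hα⟩ := hdvd
  have key : ∀ x1 x2 x3 : ℕ, a * x1 + A2 * x2 + A3 * x3 = n → x3 % A2 = ρ := by
    intro x1 x2 x3 hz
    have h1 : A3 * x3 ≡ n [MOD A2] := by
      have hn : n = A2 * (α * x1 + x2) + A3 * x3 := by rw [hα] at hz; rw [← hz]; ring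
      rw [hn]
      exact (Nat.modEq_iff_dvd' (Nat.le_add_left _ _)).mpr ⟨α * x1 + x2, by omega⟩
    have h4 : A3 * x3 ≡ A3 * ρ [MOD A2] := h1.trans hρn.symm
    have h5 : x3 ≡ ρ [MOD A2] := Nat.ModEq.cancel_left_of_coprime (by rwa [Nat.gcd_comm] at hcop) h4
    rw [Nat.ModEq] at h5
    rwa [Nat.mod_eq_of_lt hρ] at h5
  apply Finset.card_bij (fun z _ => (z.1, z.2.2 / A2))
  · rintro ⟨x1, x2, x3⟩ hz
    simp only [mem_filter, mem_product, mem_range] at hz ⊢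
    obtain ⟨⟨b1, b2, b3⟩, hsum⟩ := hz
    have hx3 : x3 % A2 = ρ := key _ _ _ hsum
    have h9 : A2 * A3 * (x3 / A2) + A3 * ρ = A3 * x3 := by
      conv_rhs => rw [← Nat.div_add_mod x3 A2, hx3]
      ring
    have hd : x3 / A2 ≤ x3 := Nat.div_le_self x3 A2
    exact ⟨⟨b1, by omega⟩, by omega⟩
  · rintro ⟨x1, x2, x3⟩ hz ⟨y1, y2, y3⟩ hw heq
    simp only [mem_filter, mem_product, mem_range] at hz hw
    simp only [Prod.mk.injEq] at heq
    obtain ⟨he1, he2⟩ := heq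
    have hx3 : x3 % A2 = ρ := key _ _ _ hz.2
    have hy3 : y3 % A2 = ρ := key _ _ _ hw.2
    have h33 : x3 = y3 := by
      have d1 := Nat.div_add_mod x3 A2
      have d2 := Nat.div_add_mod y3 A2
      rw [hx3] at d1
      rw [hy3] at d2
      rw [he2] at d1
      omega
    have hz2 := hz.2
    have hw2 := hw.2
    subst he1 h33
    have h22 : A2 * x2 = A2 * y2 := by omega
    have : x2 = y2 := Nat.eq_of_mul_eq_mul_left h2 h22
    simp [this]
  · rintro ⟨u, t⟩ hw
    simp only [mem_filter, mem_product, mem_range] at hw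
    obtain ⟨⟨b1, b2⟩, hle⟩ := hw
    have h0 : a * u + A2 * A3 * t = A2 * (α * u + A3 * t) := by rw [hα]; ring
    have hmod : (a * u + A2 * A3 * t + A3 * ρ) ≡ n [MOD A2] := by
      have heq : a * u + A2 * A3 * t + A3 * ρ = A3 * ρ + A2 * (α * u + A3 * t) := by omega
      rw [heq]
      have hz0 : A2 * (α * u + A3 * t) ≡ 0 [MOD A2] :=
        (Nat.modEq_zero_iff_dvd).mpr ⟨α * u + A3 * t, rfl⟩
      calc A3 * ρ + A2 * (α * u + A3 * t) ≡ A3 * ρ + 0 [MOD A2] := Nat.ModEq.add_left _ hz0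
        _ = A3 * ρ := by rw [Nat.add_zero]
        _ ≡ n [MOD A2] := hρn
    obtain ⟨w, hwdef⟩ : A2 ∣ n - (a * u + A2 * A3 * t + A3 * ρ) :=
      (Nat.modEq_iff_dvd' hle).mp hmod
    have h8 : A3 * (A2 * t + ρ) = A2 * A3 * t + A3 * ρ := by ring
    refine ⟨⟨u, w, A2 * t + ρ⟩, ?_, ?_⟩
    · simp only [mem_filter, mem_product, mem_range]
      have hsum : a * u + A2 * w + A3 * (A2 * t + ρ) = n := by omega
      refine ⟨⟨b1, ?_, ?_⟩, hsum⟩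
      · have : w ≤ A2 * w := Nat.le_mul_of_pos_left w h2
        omega
      · have : A2 * t + ρ ≤ A3 * (A2 * t + ρ) := Nat.le_mul_of_pos_left _ h3
        omega
    · simp only [Prod.mk.injEq]
      refine ⟨trivial, ?_⟩
      rw [Nat.mul_add_div h2, Nat.div_eq_of_lt hρ]
      omega

lemma card_pair_eq (A2 A3 n ρ : ℕ)
    (hcop : Nat.gcd A3 A2 = 1) (h2 : 0 < A2) (h3 : 0 < A3)
    (hρ : ρ < A2) (hρn : A3 * ρ ≡ n [MOD A2]) :
    ((range (n+1) ×ˢ range (n+1)).filter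
        (fun z : ℕ × ℕ => A2 * z.1 + A3 * z.2 = n)).card =
      ((range (n+1)).filter
        (fun t : ℕ => A2 * A3 * t + A3 * ρ ≤ n)).card := by
  classical
  have key : ∀ x2 x3 : ℕ, A2 * x2 + A3 * x3 = n → x3 % A2 = ρ := by
    intro x2 x3 hz
    have h1 : A3 * x3 ≡ n [MOD A2] := by
      have hd : A2 ∣ (A2 * x2 + A3 * x3) - A3 * x3 := ⟨x2, by omega⟩
      have h1' : A3 * x3 ≡ A2 * x2 + A3 * x3 [MOD A2] :=
        (Nat.modEq_iff_dvd' (Nat.le_add_left _ _)).mpr hd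
      rw [← hz]
      exact h1'
    have h4 : A3 * x3 ≡ A3 * ρ [MOD A2] := h1.trans hρn.symm
    have h5 : x3 ≡ ρ [MOD A2] := Nat.ModEq.cancel_left_of_coprime (by rwa [Nat.gcd_comm] at hcop) h4
    rw [Nat.ModEq] at h5
    rwa [Nat.mod_eq_of_lt hρ] at h5
  apply Finset.card_bij (fun z _ => z.2 / A2)
  · rintro ⟨x2, x3⟩ hz
    simp only [mem_filter, mem_product, mem_range] at hz ⊢
    obtain ⟨⟨b2, b3⟩, hsum⟩ := hz
    have hx3 : x3 % A2 = ρ := key _ _ hsum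
    have h9 : A2 * A3 * (x3 / A2) + A3 * ρ = A3 * x3 := by
      conv_rhs => rw [← Nat.div_add_mod x3 A2, hx3]
      ring
    have hd : x3 / A2 ≤ x3 := Nat.div_le_self x3 A2
    exact ⟨by omega, by omega⟩
  · rintro ⟨x2, x3⟩ hz ⟨y2, y3⟩ hw heq
    simp only [mem_filter, mem_product, mem_range] at hz hw
    have hx3 : x3 % A2 = ρ := key _ _ hz.2
    have hy3 : y3 % A2 = ρ := key _ _ hw.2
    have h33 : x3 = y3 := by
      have d1 := Nat.div_add_mod x3 A2
      have d2 := Nat.div_add_mod y3 A2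
      rw [hx3] at d1
      rw [hy3] at d2
      change x3 / A2 = y3 / A2 at heq
      rw [heq] at d1
      omega
    have hz2 := hz.2
    have hw2 := hw.2
    subst h33
    have h22 : A2 * x2 = A2 * y2 := by omega
    have : x2 = y2 := Nat.eq_of_mul_eq_mul_left h2 h22
    simp [this]
  · intro t hw
    simp only [mem_filter, mem_range] at hw
    obtain ⟨b2, hle⟩ := hw
    have hmod : (A2 * A3 * t + A3 * ρ) ≡ n [MOD A2] := by
      have h0 : A2 * A3 * t = A2 * (A3 * t) := by ring
      have heq : A2 * A3 * t + A3 * ρ = A3 * ρ + A2 * (A3 * t) := by omega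
      rw [heq]
      have hz0 : A2 * (A3 * t) ≡ 0 [MOD A2] := (Nat.modEq_zero_iff_dvd).mpr ⟨A3 * t, rfl⟩
      calc A3 * ρ + A2 * (A3 * t) ≡ A3 * ρ + 0 [MOD A2] := Nat.ModEq.add_left _ hz0
        _ = A3 * ρ := by rw [Nat.add_zero]
        _ ≡ n [MOD A2] := hρn
    obtain ⟨w, hwdef⟩ : A2 ∣ n - (A2 * A3 * t + A3 * ρ) :=
      (Nat.modEq_iff_dvd' hle).mp hmod
    have h8 : A3 * (A2 * t + ρ) = A2 * A3 * t + A3 * ρ := by ring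
    refine ⟨⟨w, A2 * t + ρ⟩, ?_, ?_⟩
    · simp only [mem_filter, mem_product, mem_range]
      have hsum : A2 * w + A3 * (A2 * t + ρ) = n := by omega
      refine ⟨⟨?_, ?_⟩, hsum⟩
      · have : w ≤ A2 * w := Nat.le_mul_of_pos_left w h2
        omega
      · have : A2 * t + ρ ≤ A3 * (A2 * t + ρ) := Nat.le_mul_of_pos_left _ h3
        omega
    · show (A2 * t + ρ) / A2 = t
      rw [Nat.mul_add_div h2, Nat.div_eq_of_lt hρ]
      omega

def lenT (x y u : ℕ) : ℕ := if u ≤ y then x + 2*(y-u) else x + 1 - 2*(u-y)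

def stairT (x y h : ℕ) : Finset (ℕ × ℕ) :=
  (range (y+h+1)).biUnion (fun u => (range (lenT x y u)).image (fun t => (u, t)))

lemma mem_stairT {x y h u t : ℕ} :
    (u, t) ∈ stairT x y h ↔ u < y + h + 1 ∧ t < lenT x y u := by
  simp only [stairT, mem_biUnion, mem_range, mem_image, Prod.mk.injEq]
  constructor
  · rintro ⟨u', hu', t', ht', rfl, rfl⟩
    exact ⟨hu', ht'⟩
  · rintro ⟨hu, ht⟩
    exact ⟨u, hu, t, ht, rfl, rfl⟩

lemma stairT_card (x y h : ℕ) (hh : 2*h ≤ x + 1) :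
    (stairT x y h).card = (y+1)*x + y*(y+1) + h*(x+1-2*h) + h*(h-1) := by
  rw [stairT, card_biUnion]
  · have hcard : ∀ u, ((range (lenT x y u)).image (fun t => (u, t))).card = lenT x y u := by
      intro u
      rw [Finset.card_image_of_injective _ (fun t1 t2 ht => by
        simpa using ht : Function.Injective (fun t => (u, t)))]
      exact card_range _
    simp only [hcard]
    have hsplit : range (y + h + 1) = range (y + 1) ∪ (range h).map
        (addLeftEmbedding (y+1)) := by
      rw [← Finset.range_add]
      congr 1
      omega
    rw [hsplit, Finset.sum_union, Finset.sum_map]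
    · have e1 : ∑ u ∈ range (y+1), lenT x y u = (y+1)*x + y*(y+1) := by
        have : ∀ u ∈ range (y+1), lenT x y u = x + 2*(y-u) := by
          intro u hu
          simp only [mem_range] at hu
          rw [lenT, if_pos (by omega)]
        rw [Finset.sum_congr rfl this]
        have hrefl := Finset.sum_range_reflect (fun j => x + 2*j) (y+1)
        have : ∀ u ∈ range (y+1), x + 2*(y-u) = (fun j => x + 2*j) ((y+1) - 1 - u) := by
          intro u hu; simp only [mem_range] at hu
          simp only []
          omega
        rw [Finset.sum_congr rfl this, hrefl, Finset.sum_add_distrib]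
        rw [Finset.sum_const, ← Finset.mul_sum]
        have gauss : (∑ j ∈ range (y+1), j) * 2 = (y+1)*y := by
          rw [Finset.sum_range_id_mul_two]; simp
        have hc2 : (y+1)*y = y*(y+1) := Nat.mul_comm _ _
        simp only [card_range, smul_eq_mul]
        omega
      have e2 : ∑ v ∈ range h, lenT x y (addLeftEmbedding (y+1) v)
          = h*(x+1-2*h) + h*(h-1) := by
        have : ∀ v ∈ range h, lenT x y (addLeftEmbedding (y+1) v) = x + 1 - 2*(v+1) := by
          intro v hv
          simp only [addLeftEmbedding_apply]
          rw [lenT, if_neg (by omega)]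
          congr 1
          omega
        rw [Finset.sum_congr rfl this]
        have hrefl := Finset.sum_range_reflect (fun j => (x+1-2*h) + 2*j) h
        have : ∀ v ∈ range h, x + 1 - 2*(v+1) = (fun j => (x+1-2*h) + 2*j) (h - 1 - v) := by
          intro v hv; simp only [mem_range] at hv
          simp only []
          omega
        rw [Finset.sum_congr rfl this, hrefl, Finset.sum_add_distrib]
        rw [Finset.sum_const, ← Finset.mul_sum]
        have gauss : (∑ j ∈ range h, j) * 2 = h*(h-1) := Finset.sum_range_id_mul_two h
        simp only [card_range, smul_eq_mul]
        omega
      rw [e1, e2]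
      omega
    · rw [Finset.disjoint_left]
      intro u hu hmem
      simp only [mem_range] at hu
      simp only [mem_map, mem_range, addLeftEmbedding_apply] at hmem
      omega
  · -- pairwise disjoint
    intro u1 h1 u2 h2 hne
    rw [Function.onFun, Finset.disjoint_left]
    rintro ⟨p1, p2⟩ hp hq
    simp only [mem_image, mem_range, Prod.mk.injEq] at hp hq
    obtain ⟨t1, _, rfl, _⟩ := hp
    obtain ⟨t2, _, h21, _⟩ := hq
    exact hne h21.symm

lemma incl_A (a c A2 x y h u t : ℕ) (hc : 0 < c) (hA2 : 0 < A2) (h2c : a ≤ 2*c)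
    (hend : x*c < a*(h+1) + A2)
    (hstep : ∀ v, v ≤ h → 2*(v*c) < c + v*a)
    (hle : a*u + c*t + A2 ≤ x*c + y*a) :
    u < y + h + 1 ∧ t < lenT x y u := by
  have hya : y*a = a*y := Nat.mul_comm _ _
  have hu : u ≤ y + h := by
    by_contra hcon
    push_neg at hcon
    have h1 : a*(y+h+1) ≤ a*u := Nat.mul_le_mul_left a hcon
    have h2 : a*(y+h+1) = a*y + a*(h+1) := by ring
    omega
  refine ⟨by omega, ?_⟩
  rcases le_or_gt u y with hcase | hcase
  · have hyw : y = u + (y - u) := by omega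
    rw [lenT, if_pos hcase]
    set w := y - u with hw
    have e1 : y*a = a*u + w*a := by rw [hyw]; ring
    have e2 : w*a ≤ w*(2*c) := Nat.mul_le_mul_left w h2c
    have e3 : c*(x + 2*w) = x*c + w*(2*c) := by ring
    have e4 : c*t < c*(x + 2*w) := by omega
    have := Nat.lt_of_mul_lt_mul_left e4
    omega
  · have huv : u = y + (u - y) := by omega
    rw [lenT, if_neg (by omega)]
    set v := u - y with hv
    have hv1 : 1 ≤ v := by omega
    have hvh : v ≤ h := by omega
    have e1 : a*u = a*y + v*a := by rw [huv]; ring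
    have e2 := hstep v hvh
    have e3 : c*(t + 2*v) = c*t + 2*(v*c) := by ring
    have e4 : c*(x+1) = x*c + c := by ring
    have e5 : c*(t + 2*v) < c*(x+1) := by omega
    have := Nat.lt_of_mul_lt_mul_left e5
    omega

lemma incl_B (a c x y h u t : ℕ) (hc : 0 < c) (h2c : a ≤ 2*c)
    (hstep : ∀ w, w ≤ y → 2*(w*c) < c + w*a)
    (hu : u < y + h + 1) (ht : t < lenT x y u) :
    a*u + c*t ≤ x*c + y*a := by
  have hya : y*a = a*y := Nat.mul_comm _ _
  rcases le_or_gt u y with hcase | hcase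
  · have hyw : y = u + (y - u) := by omega
    rw [lenT, if_pos hcase] at ht
    set w := y - u with hw
    have e1 : y*a = a*u + w*a := by rw [hyw]; ring
    have e2 := hstep w (by omega)
    have e3 : c*t + c ≤ c*(x + 2*w) := by
      have h5 : t + 1 ≤ x + 2*w := ht
      calc c*t + c = c*(t+1) := by ring
        _ ≤ c*(x+2*w) := Nat.mul_le_mul_left c h5
    have e4 : c*(x + 2*w) = x*c + 2*(w*c) := by ring
    have e5 : w*(2*c) = 2*(w*c) := by ring
    have e6 : w*a ≤ w*(2*c) := Nat.mul_le_mul_left w h2c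
    omega
  · have huv : u = y + (u - y) := by omega
    rw [lenT, if_neg (by omega)] at ht
    set v := u - y with hv
    have e1 : a*u = a*y + v*a := by rw [huv]; ring
    have e2 : v*a ≤ v*(2*c) := Nat.mul_le_mul_left v h2c
    have e3 : c*t + 2*(v*c) ≤ c*x := by
      have h5 : t + 2*v ≤ x := by omega
      calc c*t + 2*(v*c) = c*(t + 2*v) := by ring
        _ ≤ c*x := Nat.mul_le_mul_left c h5
    have e4 : c*x = x*c := Nat.mul_comm _ _
    have e5 : v*(2*c) = 2*(v*c) := by ring
    omega

-- step lemma
lemma step_aux (v K a c : ℕ) (hv : v ≤ K) (hKa : 2*(K*c) < c + K*a) (h2c : a ≤ 2*c) :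
    2*(v*c) < c + v*a := by
  zify at hv hKa h2c ⊢
  nlinarith [mul_nonneg (sub_nonneg.mpr hv) (sub_nonneg.mpr h2c)]

-- sum identity
lemma sum_id1 (i j : ℕ) :
    (j+1)*(2*i) + j*(j+1) + i*(2*i+1-2*i) + i*(i-1) = (i+j)*((i+j)+1) + i := by
  have e1 : 2*i+1-2*i = 1 := by omega
  rw [e1]
  rcases Nat.eq_zero_or_pos i with h0 | h0
  · subst h0; simp
  · obtain ⟨i', rfl⟩ : ∃ i', i = i' + 1 := ⟨i-1, by omega⟩
    have e2 : i' + 1 - 1 = i' := by omega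
    rw [e2]; ring

lemma sum_id2 (g w : ℕ) :
    (w+1)*(2*g+1) + w*(w+1) + g*(2*g+1+1-2*g) + g*(g-1) = (g+w)*((g+w)+1) + (g+w+1+g) := by
  have e1 : 2*g+1+1-2*g = 2 := by omega
  rw [e1]
  rcases Nat.eq_zero_or_pos g with h0 | h0
  · subst h0; simp; ring
  · obtain ⟨g', rfl⟩ : ∃ g', g = g' + 1 := ⟨g-1, by omega⟩
    have e2 : g' + 1 - 1 = g' := by omega
    rw [e2]; ring

lemma sum_id (k i x y h : ℕ)
    (hc : (i ≤ k ∧ x = 2*i ∧ y = k-i) ∨ (k < i ∧ i ≤ 2*k+1 ∧ x = 2*(i-k)-1 ∧ y = 2*k+1-i))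
    (hh : h = x/2) :
    (y+1)*x + y*(y+1) + h*(x+1-2*h) + h*(h-1) = k*(k+1)+i := by
  rcases hc with ⟨h1,h2,h3⟩ | ⟨h1,h1',h2,h3⟩
  · obtain ⟨j, rfl⟩ : ∃ j, k = i + j := ⟨k - i, by omega⟩
    have hy : y = j := by omega
    have hh2 : h = i := by omega
    rw [h2, hy, hh2]
    exact sum_id1 i j
  · obtain ⟨g, rfl⟩ : ∃ g, i = k + 1 + g := ⟨i-k-1, by omega⟩
    obtain ⟨w, rfl⟩ : ∃ w, k = g + w := ⟨k-g, by omega⟩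
    have hx : x = 2*g+1 := by omega
    have hy : y = w := by omega
    have hh2 : h = g := by omega
    rw [hx, hy, hh2]
    have := sum_id2 g w
    omega

-- integer gap lemma
lemma key_ge (A2 n B L : ℕ) (hA2 : 0 < A2)
    (hdvd1 : (A2:ℤ) ∣ (n:ℤ) - (B:ℤ)) (hdvd2 : A2 ∣ L)
    (hlb : (L:ℤ) - (A2:ℤ) < (n:ℤ) - (B:ℤ)) : L + B ≤ n := by
  have h3 : (A2:ℤ) ∣ ((n:ℤ) - B) - L := hdvd1.sub (Int.natCast_dvd_natCast.mpr hdvd2)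
  have h4 : (0:ℤ) ≤ (n:ℤ) - B - L := by
    by_contra hneg
    push_neg at hneg
    have h5 : (A2:ℤ) ∣ -((n:ℤ) - B - L) := dvd_neg.mpr h3
    have h6 : (A2:ℤ) ≤ -((n:ℤ) - B - L) := Int.le_of_dvd (by omega) h5
    omega
  omega

lemma genFrob_eq_of {κ : ℕ} (aa : Fin κ → ℕ) (σ N : ℕ)
    (hN : repCount aa N ≤ σ) (hup : ∀ n : ℕ, N < n → σ < repCount aa n) :
    genFrob aa σ = (N : ℤ) := by
  apply IsGreatest.csSup_eq
  constructor
  · show repCountZ aa (N : ℤ) ≤ σ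
    rw [repCountZ, if_pos (by positivity)]
    simpa using hN
  · intro m hm
    simp only [Set.mem_setOf_eq] at hm
    by_contra hcon
    push_neg at hcon
    have h0 : (0:ℤ) ≤ m := le_trans (by positivity) (le_of_lt hcon)
    rw [repCountZ, if_pos h0] at hm
    have : N < m.toNat := by omega
    exact absurd hm (by have := hup _ this; omega)

lemma exists_rho (A2 A3 n : ℕ) (h2 : 1 < A2) (hcop : Nat.gcd A3 A2 = 1) :
    ∃ ρ, ρ < A2 ∧ A3 * ρ ≡ n [MOD A2] := by
  obtain ⟨b, -, hb⟩ := Nat.exists_mul_mod_eq_one_of_coprime hcop h2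
  refine ⟨(b * n) % A2, Nat.mod_lt _ (by omega), ?_⟩
  calc A3 * ((b*n) % A2) ≡ A3 * (b*n) [MOD A2] :=
        Nat.ModEq.mul_left A3 (Nat.mod_modEq _ _)
    _ = (A3 * b) * n := by ring
    _ ≡ 1 * n [MOD A2] := Nat.ModEq.mul_right n (by rw [Nat.ModEq, hb, Nat.one_mod_eq_one.mpr (by omega)])
    _ = n := by ring

lemma sqrt_calc (s k i : ℕ) (hi : i ≤ 2*k+1) (hdecomp : s = k*(k+1)+i) :
    (Nat.sqrt (4*s+5) - 1)/2 = if i = 2*k+1 then k+1 else k := by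
  rcases lt_trichotomy i k with hik | hik | hik
  · have h1 : (2*k+1) ≤ Nat.sqrt (4*s+5) := by
      rw [Nat.le_sqrt]; nlinarith
    have h2 : Nat.sqrt (4*s+5) < 2*k+2 := by
      rw [Nat.sqrt_lt]; nlinarith
    rw [if_neg (by omega)]
    omega
  · have h1 : (2*k+2) ≤ Nat.sqrt (4*s+5) := by
      rw [Nat.le_sqrt]; nlinarith
    have h2 : Nat.sqrt (4*s+5) < 2*k+3 := by
      rw [Nat.sqrt_lt]; nlinarith
    rw [if_neg (by omega)]
    omega
  · rcases Nat.lt_or_ge i (2*k+1) with hik2 | hik2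
    · have h1 : (2*k+2) ≤ Nat.sqrt (4*s+5) := by
        rw [Nat.le_sqrt]; nlinarith
      have h2 : Nat.sqrt (4*s+5) < 2*k+3 := by
        rw [Nat.sqrt_lt]; nlinarith
      rw [if_neg (by omega)]
      omega
    · have hieq : i = 2*k+1 := by omega
      have h1 : (2*k+3) ≤ Nat.sqrt (4*s+5) := by
        rw [Nat.le_sqrt]; nlinarith
      have h2 : Nat.sqrt (4*s+5) < 2*k+4 := by
        rw [Nat.sqrt_lt]; nlinarith
      rw [if_pos hieq]
      omega

end Aux


/-- for `s ≥ 2` written as `s = k(k+1) + i`, `K_s^od = ⌊(√(4s+5) - 1)/2⌋`, and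
`A₁, A₂, A₃ > 1` with `gcd(A₁,A₂,A₃) = 1`, `A₂ ∣ A₁` and
`1/2 < A₂A₃/A₁ < K_s^od/(2K_s^od - 1)`, one has
`g(A₁, A₂, A₃; s) = g(A₂, A₃; x_s^odd) + y_s^odd·A₁`. -/
theorem stmt_17 (s : ℕ) (hs : 2 ≤ s) (k i : ℕ) (hi : i ≤ 2 * k + 1)
    (hdecomp : s = k * (k + 1) + i)
    (A1 A2 A3 : ℕ) (h1 : 1 < A1) (h2 : 1 < A2) (h3 : 1 < A3)
    (hgcd : Nat.gcd A1 (Nat.gcd A2 A3) = 1) (hdvd : A2 ∣ A1)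
    (hlow : (1 : ℚ) / 2 < ((A2 * A3 : ℕ) : ℚ) / (A1 : ℚ))
    (hhigh : ((A2 * A3 : ℕ) : ℚ) / (A1 : ℚ) <
      (((Nat.sqrt (4 * s + 5) - 1) / 2 : ℕ) : ℚ) /
        (2 * (((Nat.sqrt (4 * s + 5) - 1) / 2 : ℕ) : ℚ) - 1)) :
    genFrob ![A1, A2, A3] s =
      genFrob ![A2, A3] (xOddN k i) + ((yOddN k i * A1 : ℕ) : ℤ) := by
  classical
  have h2p : 0 < A2 := by omega
  have h3p : 0 < A3 := by omega
  have h1p : 0 < A1 := by omega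
  have hk1 : 1 ≤ k := by
    rcases Nat.eq_zero_or_pos k with rfl | h
    · simp at hdecomp; omega
    · exact h
  have hcop23 : Nat.gcd A2 A3 = 1 := by
    have hg : Nat.gcd A2 A3 ∣ A1 := (Nat.gcd_dvd_left A2 A3).trans hdvd
    have hgg : Nat.gcd A2 A3 ∣ Nat.gcd A1 (Nat.gcd A2 A3) := Nat.dvd_gcd hg dvd_rfl
    rw [hgcd] at hgg
    exact Nat.dvd_one.mp hgg
  have hcop' : Nat.gcd A3 A2 = 1 := by rwa [Nat.gcd_comm] at hcop23
  set c := A2 * A3 with hcdef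
  set x := xOddN k i with hxdef
  set y := yOddN k i with hydef
  set h := x / 2 with hhdef
  have hx_cases : (i ≤ k ∧ x = 2*i ∧ y = k-i) ∨
      (k < i ∧ i ≤ 2*k+1 ∧ x = 2*(i-k)-1 ∧ y = 2*k+1-i) := by
    rcases le_or_gt i k with hik | hik
    · left
      refine ⟨hik, ?_, ?_⟩
      · rw [hxdef, xOddN, if_pos hik]
      · rw [hydef, yOddN, if_pos hik]
    · right
      refine ⟨hik, hi, ?_, ?_⟩
      · rw [hxdef, xOddN, if_neg (by omega)]
      · rw [hydef, yOddN, if_neg (by omega)]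
  set K := if i = 2*k+1 then k+1 else k with hKdef
  have hKk : k ≤ K := by rw [hKdef]; split <;> omega
  have hKpos : 0 < K := by omega
  have hyk : y ≤ k := by rcases hx_cases with ⟨p,q,e⟩|⟨p,q,r,e⟩ <;> omega
  have hhk : h ≤ k := by rcases hx_cases with ⟨p,e,q⟩|⟨p,q,e,r⟩ <;> omega
  -- hypothesis conversions
  have haQ : (0:ℚ) < (A1:ℚ) := by positivity
  rw [div_lt_div_iff₀ (by norm_num) haQ] at hlow
  have ha2c : A1 < 2*c := by
    have hq : ((A1:ℕ):ℚ) < ((2*c:ℕ):ℚ) := by push_cast at hlow ⊢; linarith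
    exact_mod_cast hq
  have hKs := sqrt_calc s k i hi hdecomp
  rw [← hKdef] at hKs
  rw [hKs] at hhigh
  have hdenpos : (0:ℚ) < 2*(K:ℚ) - 1 := by
    have hx1 : (1:ℚ) ≤ (K:ℚ) := by exact_mod_cast hKpos
    linarith
  rw [div_lt_div_iff₀ haQ hdenpos] at hhigh
  have hKa : 2*(K*c) < c + K*A1 := by
    have hq : ((2*(K*c):ℕ):ℚ) < ((c + K*A1 : ℕ):ℚ) := by push_cast; nlinarith [hhigh]
    exact_mod_cast hq
  have hstepK : ∀ v, v ≤ K → 2*(v*c) < c + v*A1 :=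
    fun v hv => step_aux v K A1 c hv hKa (by omega)
  have hca : c < A1 := by
    have hks := hstepK k hKk
    by_contra hcon
    push_neg at hcon
    have hm1 : k*A1 ≤ k*c := Nat.mul_le_mul_left k hcon
    have hm2 : c ≤ k*c := Nat.le_mul_of_pos_left c hk1
    omega
  have hcge : A2 + A3 ≤ c := Nat.add_le_mul h2 h3
  set F := c - (A2 + A3) with hFdef
  have hF : F + A2 + A3 = c := by omega
  have hA3A2 : A3*(A2-1) + A3 = c := by
    have e : A3*(A2-1) + A3 = A3*((A2-1)+1) := by ring
    rw [e, Nat.sub_add_cancel (by omega)]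
    rw [hcdef]; ring
  have hFA2 : F + A2 = A3*(A2-1) := by omega
  set N2 := x*c + F with hN2def
  set N := N2 + y*A1 with hNdef
  have hNval : N = x*c + F + y*A1 := by rw [hNdef, hN2def]
  -- end-of-staircase inequality
  have hend : x*c < A1*(h+1) + A2 := by
    rcases hx_cases with ⟨hik, hx, hyv⟩ | ⟨hik, hik2, hx, hyv⟩
    · have hhi : h = i := by omega
      have hstep := hstepK i (le_trans hik hKk)
      have e3 : x*c = 2*(i*c) := by rw [hx]; ring
      have e4 : A1*(h+1) = i*A1 + A1 := by rw [hhi]; ring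
      omega
    · have hik3 : i - k ≤ K := by rw [hKdef]; split <;> omega
      have hv := hstepK (i-k) hik3
      have e0 : (2*(i-k)-1) + 1 = 2*(i-k) := by omega
      have e3 : x*c + c = 2*((i-k)*c) := by
        calc x*c + c = ((2*(i-k)-1)+1)*c := by rw [hx]; ring
          _ = (2*(i-k))*c := by rw [e0]
          _ = 2*((i-k)*c) := by ring
      have e4 : A1*(h+1) = (i-k)*A1 := by
        have hh1 : h + 1 = i - k := by omega
        rw [← hh1]; ring
      omega
  -- modular facts
  obtain ⟨α, hα⟩ := hdvd
  have hmodN2 : A3*(A2-1) ≡ N2 [MOD A2] := by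
    show (A3*(A2-1)) % A2 = N2 % A2
    have hN2e : N2 = A2*(x*A3) + F := by rw [hN2def, hcdef]; ring
    rw [← hFA2, hN2e, Nat.add_mod_right, Nat.mul_add_mod]
  have hmodN : A3*(A2-1) ≡ N [MOD A2] := by
    show (A3*(A2-1)) % A2 = N % A2
    have hNe : N = A2*(x*A3 + y*α) + F := by rw [hNval, hcdef, hα]; ring
    rw [← hFA2, hNe, Nat.add_mod_right, Nat.mul_add_mod]
  have hcpos : 0 < c := by omega
  -- ===== pair computation =====
  have pairA : repCount ![A2,A3] N2 ≤ x := by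
    rw [repCount_two, card_pair_eq A2 A3 N2 (A2-1) hcop' h2p h3p (by omega) hmodN2]
    simp only [← hcdef]
    have hsub : ((range (N2+1)).filter (fun t => c*t + A3*(A2-1) ≤ N2)) ⊆ range x := by
      intro t ht
      simp only [mem_filter, mem_range] at ht ⊢
      obtain ⟨htn, hcond⟩ := ht
      have hlt : c*t < c*x := by
        have e : c*x = x*c := Nat.mul_comm _ _
        omega
      exact Nat.lt_of_mul_lt_mul_left hlt
    calc _ ≤ (range x).card := card_le_card hsub
      _ = x := card_range x
  have pairB : ∀ n : ℕ, N2 < n → x < repCount ![A2,A3] n := by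
    intro n hn
    obtain ⟨ρ, hρlt, hρn⟩ := exists_rho A2 A3 n h2 hcop'
    rw [repCount_two, card_pair_eq A2 A3 n ρ hcop' h2p h3p hρlt hρn]
    simp only [← hcdef]
    have hBF : A3*ρ ≤ F + A2 := by
      have hm := Nat.mul_le_mul_left A3 (show ρ ≤ A2-1 by omega)
      omega
    have hkey : x*c + A3*ρ ≤ n := by
      apply key_ge A2 n (A3*ρ) (x*c) h2p
      · exact (Nat.modEq_iff_dvd).mp hρn
      · exact Dvd.dvd.mul_left ⟨A3, hcdef⟩ x
      · omega
    have hsub : range (x+1) ⊆ (range (n+1)).filter (fun t => c*t + A3*ρ ≤ n) := by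
      intro t ht
      simp only [mem_range] at ht
      have htx : t ≤ x := by omega
      have hct : c*t ≤ c*x := Nat.mul_le_mul_left c htx
      have e : c*x = x*c := Nat.mul_comm _ _
      have htc : t ≤ c*t := Nat.le_mul_of_pos_left t hcpos
      simp only [mem_filter, mem_range]
      omega
    calc x < x + 1 := by omega
      _ = (range (x+1)).card := (card_range _).symm
      _ ≤ _ := card_le_card hsub
  have hpair : genFrob ![A2,A3] x = (N2:ℤ) := genFrob_eq_of _ x N2 pairA pairB
  -- ===== triple computation =====
  have hstep_h : ∀ v, v ≤ h → 2*(v*c) < c + v*A1 :=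
    fun v hv => hstepK v (le_trans hv (le_trans hhk hKk))
  have hstep_y : ∀ w, w ≤ y → 2*(w*c) < c + w*A1 :=
    fun w hw => hstepK w (le_trans hw (le_trans hyk hKk))
  have hcard_stair : (stairT x y h).card = s := by
    rw [stairT_card x y h (by omega), hdecomp]
    exact sum_id k i x y h hx_cases hhdef
  have tripleA : repCount ![A1,A2,A3] N ≤ s := by
    rw [repCount_three, card_triple_eq A1 A2 A3 N (A2-1) ⟨α, hα⟩ hcop' h2p h3p (by omega) hmodN]
    simp only [← hcdef]
    have hsub : ((range (N+1) ×ˢ range (N+1)).filter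
        (fun w : ℕ × ℕ => A1*w.1 + c*w.2 + A3*(A2-1) ≤ N)) ⊆ stairT x y h := by
      rintro ⟨u, t⟩ hp
      simp only [mem_filter, mem_product, mem_range] at hp
      obtain ⟨⟨hb1, hb2⟩, hcond⟩ := hp
      have hcond' : A1*u + c*t + A2 ≤ x*c + y*A1 := by omega
      have hin := incl_A A1 c A2 x y h u t hcpos h2p (by omega) hend hstep_h hcond'
      exact mem_stairT.mpr hin
    calc _ ≤ (stairT x y h).card := card_le_card hsub
      _ = s := hcard_stair
  have tripleB : ∀ n : ℕ, N < n → s < repCount ![A1,A2,A3] n := by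
    intro n hn
    obtain ⟨ρ, hρlt, hρn⟩ := exists_rho A2 A3 n h2 hcop'
    rw [repCount_three, card_triple_eq A1 A2 A3 n ρ ⟨α, hα⟩ hcop' h2p h3p hρlt hρn]
    simp only [← hcdef]
    have hBF : A3*ρ ≤ F + A2 := by
      have hm := Nat.mul_le_mul_left A3 (show ρ ≤ A2-1 by omega)
      omega
    have hkey : (x*c + y*A1) + A3*ρ ≤ n := by
      apply key_ge A2 n (A3*ρ) (x*c + y*A1) h2p
      · exact (Nat.modEq_iff_dvd).mp hρn
      · exact dvd_add (Dvd.dvd.mul_left ⟨A3, hcdef⟩ x) (Dvd.dvd.mul_left ⟨α, hα⟩ y)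
      · omega
    have hnotmem : (y, x) ∉ stairT x y h := by
      rw [mem_stairT]
      rw [lenT, if_pos (le_refl y)]
      omega
    have hsub : insert (y, x) (stairT x y h) ⊆
        ((range (n+1) ×ˢ range (n+1)).filter
          (fun w : ℕ × ℕ => A1*w.1 + c*w.2 + A3*ρ ≤ n)) := by
      intro p hp
      have hple : A1*p.1 + c*p.2 ≤ x*c + y*A1 := by
        rcases mem_insert.mp hp with rfl | hp'
        · show A1*y + c*x ≤ x*c + y*A1
          have e1 : A1*y = y*A1 := Nat.mul_comm _ _
          have e2 : c*x = x*c := Nat.mul_comm _ _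
          omega
        · obtain ⟨u, t⟩ := p
          rw [mem_stairT] at hp'
          exact incl_B A1 c x y h u t hcpos (by omega) hstep_y hp'.1 hp'.2
      simp only [mem_filter, mem_product, mem_range]
      have hp1 : p.1 ≤ A1*p.1 := Nat.le_mul_of_pos_left _ h1p
      have hp2 : p.2 ≤ c*p.2 := Nat.le_mul_of_pos_left _ hcpos
      omega
    calc s < s + 1 := by omega
      _ = (insert (y, x) (stairT x y h)).card := by
          rw [card_insert_of_notMem hnotmem, hcard_stair]
      _ ≤ _ := card_le_card hsub
  have htriple : genFrob ![A1,A2,A3] s = (N:ℤ) := genFrob_eq_of _ s N tripleA tripleB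
  rw [htriple, hpair, hNdef]
  push_cast
  ring
end

section
/- For the generalized Frobenius number of three consecutive triangular numbers with s = 12: g(t_n, t_{n+1}, t_{n+2}; 12) = ((n+1)(n+2)/4)·(9n) − 1 for every even integer n ≥ 14, and g(t_n, t_{n+1}, t_{n+2}; 12) = ((n+1)(n+2)/4)·(9n − 3) − 1 for every odd integer n ≥ 17. -/
open Finset

lemma repCount_ge_13 (a b c m : ℕ) (ha : 1 ≤ a) (hb : 1 ≤ b) (hc : 1 ≤ c)
    (X Y Z : Fin 13 → ℕ)
    (heq : ∀ i, X i * a + Y i * b + Z i * c = m)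
    (hinj : ∀ i i' : Fin 13, Y i = Y i' → Z i = Z i' → i = i') :
    13 ≤ repCount ![a, b, c] m := by
  have hX : ∀ i, X i < m + 1 := by
    intro i
    have h1 : X i * 1 ≤ X i * a := Nat.mul_le_mul_left _ ha
    have := heq i; omega
  have hY : ∀ i, Y i < m + 1 := by
    intro i
    have h1 : Y i * 1 ≤ Y i * b := Nat.mul_le_mul_left _ hb
    have := heq i; omega
  have hZ : ∀ i, Z i < m + 1 := by
    intro i
    have h1 : Z i * 1 ≤ Z i * c := Nat.mul_le_mul_left _ hc
    have := heq i; omega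
  let φ : Fin 13 → (Fin 3 → Fin (m + 1)) := fun i => ![⟨X i, hX i⟩, ⟨Y i, hY i⟩, ⟨Z i, hZ i⟩]
  have key : (univ : Finset (Fin 13)).card ≤
      (Finset.univ.filter (fun x : Fin 3 → Fin (m + 1) => ∑ i, (![a,b,c]) i * (x i : ℕ) = m)).card := by
    apply Finset.card_le_card_of_injOn φ
    · intro i _
      simp only [Finset.mem_coe, Finset.mem_filter, Finset.mem_univ, true_and, Fin.sum_univ_three, φ]
      simp only [Matrix.cons_val_zero, Matrix.cons_val_one, Matrix.head_cons, Matrix.cons_val_two,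
        Matrix.tail_cons]
      rw [mul_comm a, mul_comm b, mul_comm c]
      exact heq i
    · intro i _ i' _ h
      have h1 : Y i = Y i' := by
        have := congrFun h 1
        simpa [φ, Fin.ext_iff] using this
      have h2 : Z i = Z i' := by
        have := congrFun h 2
        simpa [φ, Fin.ext_iff] using this
      exact hinj i i' h1 h2
  simpa [repCount] using key

lemma repCount_le_12 (a b c F : ℕ) (ha : 1 ≤ a) (T : Finset (ℕ × ℕ)) (hT : T.card = 12)
    (tag : ℕ → ℕ → ℕ × ℕ)
    (hmem : ∀ x y z : ℕ, x * a + y * b + z * c = F → tag y z ∈ T)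
    (hyz : ∀ x y z x' y' z' : ℕ, x * a + y * b + z * c = F → x' * a + y' * b + z' * c = F →
      tag y z = tag y' z' → y = y' ∧ z = z') :
    repCount ![a, b, c] F ≤ 12 := by
  rw [repCount, ← hT]
  apply Finset.card_le_card_of_injOn (fun f => tag (f 1) (f 2))
  · intro f hf
    simp only [Finset.mem_coe, Finset.mem_filter, Finset.mem_univ, true_and, Fin.sum_univ_three,
      Matrix.cons_val_zero, Matrix.cons_val_one, Matrix.head_cons, Matrix.cons_val_two,
      Matrix.tail_cons] at hf
    rw [mul_comm a, mul_comm b, mul_comm c] at hf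
    exact hmem (f 0) (f 1) (f 2) hf
  · intro f hf g hg h
    simp only [Finset.mem_coe, Finset.mem_filter, Finset.mem_univ, true_and,
      Fin.sum_univ_three, Matrix.cons_val_zero, Matrix.cons_val_one, Matrix.head_cons,
      Matrix.cons_val_two, Matrix.tail_cons] at hf hg
    rw [mul_comm a, mul_comm b, mul_comm c] at hf hg
    obtain ⟨h1, h2⟩ := hyz _ _ _ _ _ _ hf hg h
    rw [← h1, ← h2] at hg
    have h0 : (f 0 : ℕ) = (g 0 : ℕ) := by
      have hxa : (f 0 : ℕ) * a = (g 0 : ℕ) * a := by omega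
      exact Nat.eq_of_mul_eq_mul_right ha hxa
    funext t
    fin_cases t <;> exact Fin.ext (by assumption)

lemma even_classify (m₀ x y z : ℕ) (h7 : 7 ≤ m₀)
    (h : x * (m₀*(2*m₀+1)) + y * ((m₀+1)*(2*m₀+1)) + z * ((m₀+1)*(2*m₀+3)) + 1
         = 9*m₀*(m₀+1)*(2*m₀+1)) :
    ∃ j p, z + 1 = (2*m₀+1)*(j+1) ∧ y + 3*j + 1 = m₀*p ∧ 1 ≤ p ∧ p + 2*j ≤ 6 := by
  have hZint : (x : ℤ) * (m₀*(2*m₀+1)) + y * ((m₀+1)*(2*m₀+1)) + z * ((m₀+1)*(2*m₀+3)) + 1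
      = 9*m₀*(m₀+1)*(2*m₀+1) := by exact_mod_cast congrArg (Nat.cast : ℕ → ℤ) h
  -- divisibility for z
  have hzd : ((2*m₀+1 : ℕ) : ℤ) ∣ ((z+1 : ℕ) : ℤ) := by
    refine ⟨9*(m₀:ℤ)*(m₀+1) - x*m₀ - y*(m₀+1) - (m₀+2)*z, ?_⟩
    push_cast
    linear_combination hZint
  have hznat : (2*m₀+1) ∣ (z+1) := Int.natCast_dvd_natCast.mp hzd
  obtain ⟨jp, hjp⟩ := hznat
  have hjpne : jp ≠ 0 := by rintro rfl; simp at hjp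
  obtain ⟨j, rfl⟩ : ∃ j, jp = j + 1 := ⟨jp - 1, by omega⟩
  -- divisibility for y
  have hyd : ((m₀ : ℕ) : ℤ) ∣ ((y + 3*z + 1 : ℕ) : ℤ) := by
    refine ⟨9*((m₀:ℤ)+1)*(2*m₀+1) - x*(2*m₀+1) - y*(2*m₀+3) - z*(2*m₀+5), ?_⟩
    push_cast
    linear_combination hZint
  have hynat : m₀ ∣ (y + 3*z + 1) := Int.natCast_dvd_natCast.mp hyd
  obtain ⟨P, hP⟩ := hynat
  have e1 : 3*((2*m₀+1)*(j+1)) = 6*(m₀*(j+1)) + 3*(j+1) := by ring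
  have hz3 : y + 3*z + 1 = (y + 3*j + 1) + 6*(m₀*(j+1)) := by omega
  have hPbig : 6*(j+1) < P := by
    have h1 : m₀*(6*(j+1)) < m₀*P := by
      have e2 : m₀*(6*(j+1)) = 6*(m₀*(j+1)) := by ring
      omega
    exact Nat.lt_of_mul_lt_mul_left h1
  obtain ⟨p, rfl⟩ : ∃ p, P = p + 6*(j+1) := ⟨P - 6*(j+1), by omega⟩
  have e3 : m₀ * (p + 6*(j+1)) = m₀ * p + 6*(m₀*(j+1)) := by ring
  have hp : y + 3*j + 1 = m₀ * p := by omega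
  have hpne : p ≠ 0 := by rintro rfl; omega
  refine ⟨j, p, by omega, hp, by omega, ?_⟩
  · -- the bound p + 2j ≤ 6
    by_contra hcon
    push_neg at hcon
    have hcon' : 7 ≤ p + 2*j := hcon
    have hpZ : (y : ℤ) + 3*j + 1 = m₀ * p := by exact_mod_cast congrArg (Nat.cast : ℕ → ℤ) hp
    have hzZ : (z : ℤ) + 1 = (2*m₀+1)*(j+1) := by exact_mod_cast congrArg (Nat.cast : ℕ → ℤ) hjp
    have key : (x:ℤ)*((m₀:ℤ)*(2*m₀+1)) + ((m₀:ℤ)+1)*(2*m₀+1)*((m₀:ℤ)*p + 2*m₀*j)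
        + ((m₀:ℤ)+1)*(2*m₀+1)*(2*m₀+1) + 1 = 9*m₀*(((m₀:ℤ)+1)*(2*m₀+1)) + 2*m₀ + 2 := by
      linear_combination hZint - ((m₀:ℤ)+1)*(2*m₀+1)*hpZ - ((m₀:ℤ)+1)*(2*m₀+3)*hzZ
    have hA : (7:ℤ)*m₀ ≤ (m₀:ℤ)*p + 2*m₀*j := by
      have : (m₀:ℤ)*7 ≤ (m₀:ℤ)*(p + 2*j) := by
        apply mul_le_mul_of_nonneg_left _ (by positivity)
        exact_mod_cast hcon'
      linarith [this]
    have hx0 : (0:ℤ) ≤ (x:ℤ)*((m₀:ℤ)*(2*m₀+1)) := by positivity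
    have hBA : ((m₀:ℤ)+1)*(2*m₀+1)*(7*m₀) ≤ ((m₀:ℤ)+1)*(2*m₀+1)*((m₀:ℤ)*p + 2*m₀*j) := by
      apply mul_le_mul_of_nonneg_left hA (by positivity)
    have h7' : (7:ℤ) ≤ (m₀:ℤ) := by exact_mod_cast h7
    nlinarith [key, hBA, hx0, h7']

def Teven : Finset (ℕ × ℕ) :=
  {(0,1),(0,2),(0,3),(0,4),(0,5),(0,6),(1,1),(1,2),(1,3),(1,4),(2,1),(2,2)}

lemma even_upper (m₀ : ℕ) (h7 : 7 ≤ m₀) :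
    repCount ![m₀*(2*m₀+1), (m₀+1)*(2*m₀+1), (m₀+1)*(2*m₀+3)]
      (9*m₀*(m₀+1)*(2*m₀+1) - 1) ≤ 12 := by
  have hFpos : 1 ≤ 9*m₀*(m₀+1)*(2*m₀+1) := by
    have e : 9*m₀*(m₀+1)*(2*m₀+1) = 18*m₀*m₀*m₀+27*m₀*m₀+9*m₀ := by ring
    omega
  set F := 9*m₀*(m₀+1)*(2*m₀+1) - 1 with hF
  have hF1 : F + 1 = 9*m₀*(m₀+1)*(2*m₀+1) := by omega
  have hcls : ∀ x y z : ℕ, x * (m₀*(2*m₀+1)) + y * ((m₀+1)*(2*m₀+1)) + z * ((m₀+1)*(2*m₀+3)) = F →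
      ∃ j p, z + 1 = (2*m₀+1)*(j+1) ∧ y + 3*j + 1 = m₀*p ∧ 1 ≤ p ∧ p + 2*j ≤ 6 := by
    intro x y z hxyz
    exact even_classify m₀ x y z h7 (by omega)
  have ha1 : 1 ≤ m₀*(2*m₀+1) := by
    have e : m₀*(2*m₀+1) = 2*m₀*m₀ + m₀ := by ring
    omega
  apply repCount_le_12 _ _ _ _ ha1 Teven (by decide)
    (fun y z => ((z+1)/(2*m₀+1) - 1, (y + 3*((z+1)/(2*m₀+1) - 1) + 1)/m₀))
  · intro x y z hxyz
    obtain ⟨j, p, hz, hp, hp1, hle⟩ := hcls x y z hxyz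
    have hdiv : (z+1)/(2*m₀+1) = j+1 := by
      rw [hz]; exact Nat.mul_div_cancel_left _ (by omega)
    rw [hdiv]
    simp only [Nat.add_sub_cancel]
    have hdiv2 : (y + 3*j + 1)/m₀ = p := by
      rw [hp]; exact Nat.mul_div_cancel_left _ (by omega)
    rw [hdiv2]
    have hj2 : j ≤ 2 := by omega
    have hp6 : p ≤ 6 := by omega
    interval_cases j <;> interval_cases p <;> first | (exfalso; omega) | decide
  · intro x y z x' y' z' h h' htag
    obtain ⟨j, p, hz, hp, hp1, hle⟩ := hcls x y z h
    obtain ⟨j', p', hz', hp', hp1', hle'⟩ := hcls x' y' z' h'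
    have hdiv : (z+1)/(2*m₀+1) = j+1 := by
      rw [hz]; exact Nat.mul_div_cancel_left _ (by omega)
    have hdiv' : (z'+1)/(2*m₀+1) = j'+1 := by
      rw [hz']; exact Nat.mul_div_cancel_left _ (by omega)
    have hdiv2 : (y + 3*j + 1)/m₀ = p := by
      rw [hp]; exact Nat.mul_div_cancel_left _ (by omega)
    have hdiv2' : (y' + 3*j' + 1)/m₀ = p' := by
      rw [hp']; exact Nat.mul_div_cancel_left _ (by omega)
    rw [hdiv, hdiv'] at htag
    simp only [Nat.add_sub_cancel, Prod.mk.injEq] at htag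
    obtain ⟨hj, htag2⟩ := htag
    subst hj
    rw [hdiv2, hdiv2'] at htag2
    subst htag2
    exact ⟨by omega, by omega⟩

/-- index data for the even case -/
def eS (i : ℕ) : ℕ := if i ≤ 6 then 6-i else if i ≤ 10 then 10-i else 12-i
def eT (i : ℕ) : ℕ := if i ≤ 6 then i else if i ≤ 10 then i-7 else i-11
def eCY (w i : ℕ) : ℕ := if i ≤ 6 then 0 else if i ≤ 10 then w+4 else w+1
def eCZ (w i : ℕ) : ℕ := if i ≤ 6 then 0 else if i ≤ 10 then 2*w+15 else 4*w+30

lemma even_lower (m₀ : ℕ) (h7 : 7 ≤ m₀) (m : ℕ) (hm : 9*m₀*(m₀+1)*(2*m₀+1) ≤ m) :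
    13 ≤ repCount ![m₀*(2*m₀+1), (m₀+1)*(2*m₀+1), (m₀+1)*(2*m₀+3)] m := by
  obtain ⟨w, rfl⟩ : ∃ w, m₀ = w + 7 := ⟨m₀ - 7, by omega⟩
  set m₀ := w + 7 with hm₀
  have hdm := Nat.div_add_mod m (2*m₀+1)
  set q := m / (2*m₀+1) with hq
  set z₀ := m % (2*m₀+1) with hz0
  have hz₀ : z₀ ≤ 2*m₀ := by
    have := Nat.mod_lt m (show 0 < 2*m₀+1 by omega); omega
  have hqge : z₀*(m₀+2) ≤ q := by
    rw [hq, Nat.le_div_iff_mul_le (show 0 < 2*m₀+1 by omega)]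
    have h1 : z₀*(m₀+2)*(2*m₀+1) ≤ 2*m₀*(m₀+2)*(2*m₀+1) :=
      Nat.mul_le_mul_right _ (Nat.mul_le_mul_right _ hz₀)
    have e1 : 2*m₀*(m₀+2)*(2*m₀+1) = 4*(m₀*m₀*m₀) + 10*(m₀*m₀) + 4*m₀ := by ring
    have e2 : 9*m₀*(m₀+1)*(2*m₀+1) = 18*(m₀*m₀*m₀) + 27*(m₀*m₀) + 9*m₀ := by ring
    omega
  obtain ⟨u, hu⟩ : ∃ u, q = u + z₀*(m₀+2) := ⟨q - z₀*(m₀+2), by omega⟩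
  rw [hu] at hdm
  have hmu : m = z₀*((m₀+1)*(2*m₀+3)) + (2*m₀+1)*u := by
    have e : (2*m₀+1)*(u + z₀*(m₀+2)) + z₀ = z₀*((m₀+1)*(2*m₀+3)) + (2*m₀+1)*u := by ring
    omega
  have hubig : m₀*m₀ ≤ u := by
    by_contra hcon
    push_neg at hcon
    have h1 : (2*m₀+1)*u ≤ (2*m₀+1)*(m₀*m₀) := Nat.mul_le_mul_left _ (by omega)
    have h2 : z₀*((m₀+1)*(2*m₀+3)) ≤ 2*m₀*((m₀+1)*(2*m₀+3)) := Nat.mul_le_mul_right _ hz₀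
    have e1 : (2*m₀+1)*(m₀*m₀) = 2*(m₀*m₀*m₀) + (m₀*m₀) := by ring
    have e2 : 2*m₀*((m₀+1)*(2*m₀+3)) = 4*(m₀*m₀*m₀) + 10*(m₀*m₀) + 6*m₀ := by ring
    have e3 : 9*m₀*(m₀+1)*(2*m₀+1) = 18*(m₀*m₀*m₀) + 27*(m₀*m₀) + 9*m₀ := by ring
    have e4 : 7*(m₀*m₀) ≤ m₀*m₀*m₀ := by
      have := Nat.mul_le_mul_right (m₀*m₀) h7; omega
    have e5 : 7*m₀ ≤ m₀*m₀ := by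
      have := Nat.mul_le_mul_right m₀ h7; omega
    omega
  have hdm2 := Nat.div_add_mod u m₀
  set U := u / m₀ with hU
  set y₀ := u % m₀ with hy0
  have hy₀ : y₀ ≤ m₀ - 1 := by
    have := Nat.mod_lt u (show 0 < m₀ by omega); omega
  have hUy : y₀ ≤ U := by
    have hh : m₀ ≤ U := by
      rw [hU, Nat.le_div_iff_mul_le (show 0 < m₀ by omega)]
      have e : m₀ * m₀ = m₀ * m₀ := rfl
      omega
    omega
  obtain ⟨M, hM⟩ : ∃ M, U = M + y₀ := ⟨U - y₀, by omega⟩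
  rw [hM] at hdm2
  have hmfull : m = y₀*((m₀+1)*(2*m₀+1)) + z₀*((m₀+1)*(2*m₀+3)) + (m₀*(2*m₀+1))*M := by
    have e1 : (2*m₀+1)*(m₀*(M+y₀) + y₀) =
        y₀*((m₀+1)*(2*m₀+1)) + (m₀*(2*m₀+1))*M := by ring
    have e2 : (2*m₀+1)*u = (2*m₀+1)*(m₀*(M+y₀) + y₀) := by rw [hdm2]
    omega
  have hMbig : 6*m₀+6 ≤ M := by
    by_contra hcon
    push_neg at hcon
    have h1 : (m₀*(2*m₀+1))*M ≤ (m₀*(2*m₀+1))*(6*m₀+5) := Nat.mul_le_mul_left _ (by omega)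
    have h2 : y₀*((m₀+1)*(2*m₀+1)) ≤ (w+6)*((m₀+1)*(2*m₀+1)) :=
      Nat.mul_le_mul_right _ (by omega)
    have h3 : z₀*((m₀+1)*(2*m₀+3)) ≤ 2*m₀*((m₀+1)*(2*m₀+3)) := Nat.mul_le_mul_right _ hz₀
    have e1 : (w+6)*((m₀+1)*(2*m₀+1)) = 2*(w*w*w) + 43*(w*w) + 306*w + 720 := by
      rw [hm₀]; ring
    have e2 : 2*m₀*((m₀+1)*(2*m₀+3)) = 4*(w*w*w) + 94*(w*w) + 734*w + 1904 := by
      rw [hm₀]; ring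
    have e3 : (m₀*(2*m₀+1))*(6*m₀+5) = 12*(w*w*w) + 268*(w*w) + 1993*w + 4935 := by
      rw [hm₀]; ring
    have e4 : 9*m₀*(m₀+1)*(2*m₀+1) = 18*(w*w*w) + 405*(w*w) + 3033*w + 7560 := by
      rw [hm₀]; ring
    omega
  obtain ⟨D, hD⟩ : ∃ D, M = 6*(m₀+1) + D := ⟨M - (6*m₀+6), by omega⟩
  rw [hD] at hmfull
  clear hdm hqge hu hmu hubig hdm2 hUy hM hMbig hm hq hz0 hU hy0 hD
  apply repCount_ge_13 _ _ _ _ (by nlinarith) (by nlinarith) (by nlinarith)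
    (fun i => D + (eS i.val)*(m₀+1))
    (fun i => y₀ + (eT i.val)*m₀ + eCY w i.val)
    (fun i => z₀ + eCZ w i.val)
  · intro i
    fin_cases i <;> simp only [eS, eT, eCY, eCZ] <;> norm_num <;> rw [hmfull, hm₀] <;> ring
  · intro i i' hY hZ
    have hi : i.val < 13 := i.isLt
    have hi' : i'.val < 13 := i'.isLt
    have hcan : ∀ s s' : ℕ, s*m₀ = s'*m₀ → s = s' := fun s s' h =>
      Nat.eq_of_mul_eq_mul_right (by omega) h
    refine Fin.ext ?_
    simp only [eT, eCY, eCZ] at hY hZ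
    split_ifs at hY hZ <;>
      first
        | omega
        | (have := hcan i.val i'.val (by omega); omega)
        | (have := hcan (i.val-7) (i'.val-7) (by omega); omega)
        | (have := hcan (i.val-11) (i'.val-11) (by omega); omega)

lemma genFrob_eq_of_s18 {k : ℕ} (a : Fin k → ℕ) (s : ℕ) (F : ℕ)
    (hF : repCount a F ≤ s) (hgt : ∀ m : ℕ, F < m → s < repCount a m) :
    genFrob a s = (F : ℤ) := by
  apply IsGreatest.csSup_eq
  constructor
  · show repCountZ a (F : ℤ) ≤ s
    rw [repCountZ, if_pos (by positivity)]
    simpa using hF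
  · intro x hx
    by_contra hlt
    push_neg at hlt
    have hx0 : (0:ℤ) ≤ x := le_trans (by positivity) hlt.le
    have hxz : repCountZ a x = repCount a x.toNat := by rw [repCountZ, if_pos hx0]
    have hFx : F < x.toNat := Int.lt_toNat.mpr hlt
    have := hgt x.toNat hFx
    have hx' : repCountZ a x ≤ s := hx
    omega

lemma t_even0 (m₀ : ℕ) : t (2*m₀) = m₀*(2*m₀+1) := by
  rw [t, show 2*m₀*(2*m₀+1) = 2*(m₀*(2*m₀+1)) from by ring, Nat.mul_div_cancel_left _ two_pos]

lemma t_even1 (m₀ : ℕ) : t (2*m₀+1) = (m₀+1)*(2*m₀+1) := by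
  rw [t, show (2*m₀+1)*(2*m₀+1+1) = 2*((m₀+1)*(2*m₀+1)) from by ring,
    Nat.mul_div_cancel_left _ two_pos]

lemma t_even2 (m₀ : ℕ) : t (2*m₀+2) = (m₀+1)*(2*m₀+3) := by
  rw [t, show (2*m₀+2)*(2*m₀+2+1) = 2*((m₀+1)*(2*m₀+3)) from by ring,
    Nat.mul_div_cancel_left _ two_pos]

lemma even_part (n : ℕ) (he : Even n) (h14 : 14 ≤ n) :
    genFrob ![t n, t (n + 1), t (n + 2)] 12 =
      ((n : ℤ) + 1) * ((n : ℤ) + 2) * (9 * (n : ℤ)) / 4 - 1 := by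
  obtain ⟨m₀, rfl⟩ : ∃ m₀, n = 2*m₀ := by
    obtain ⟨r, hr⟩ := he; exact ⟨r, by omega⟩
  have h7 : 7 ≤ m₀ := by omega
  have hFpos : 1 ≤ 9*m₀*(m₀+1)*(2*m₀+1) := by
    have e : 9*m₀*(m₀+1)*(2*m₀+1) = 18*(m₀*m₀*m₀)+27*(m₀*m₀)+9*m₀ := by ring
    omega
  have hmain : genFrob ![t (2*m₀), t (2*m₀ + 1), t (2*m₀ + 2)] 12
      = ((9*m₀*(m₀+1)*(2*m₀+1) - 1 : ℕ) : ℤ) := by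
    rw [t_even0, t_even1, t_even2]
    apply genFrob_eq_of_s18
    · exact even_upper m₀ h7
    · intro m hm
      have := even_lower m₀ h7 m (by omega)
      omega
  rw [hmain]
  have e1 : (((2*m₀ : ℕ) : ℤ) + 1) * (((2*m₀ : ℕ) : ℤ) + 2) * (9 * ((2*m₀ : ℕ) : ℤ))
      = 4 * (9*(m₀:ℤ)*((m₀:ℤ)+1)*(2*(m₀:ℤ)+1)) := by push_cast; ring
  rw [e1, Int.mul_ediv_cancel_left _ (by norm_num)]
  push_cast [hFpos]
  ring
lemma odd_classify (m₁ x y z : ℕ) (h8 : 8 ≤ m₁)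
    (h : x * ((m₁+1)*(2*m₁+1)) + y * ((m₁+1)*(2*m₁+3)) + z * ((m₁+2)*(2*m₁+3)) + 1
         = 3*(m₁+1)*(3*m₁+1)*(2*m₁+3)) :
    ∃ j p, z + 1 = (m₁+1)*(j+1) ∧ y + (m₁+2)*j + 1 = (2*m₁+1)*p ∧ 1 ≤ p ∧ p ≤ 3 ∧
      j + 1 ≤ 2*p := by
  have hZint : (x : ℤ) * ((m₁+1)*(2*m₁+1)) + y * ((m₁+1)*(2*m₁+3)) + z * ((m₁+2)*(2*m₁+3)) + 1
      = 3*(m₁+1)*(3*m₁+1)*(2*m₁+3) := by exact_mod_cast congrArg (Nat.cast : ℕ → ℤ) h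
  have hzd : ((m₁+1 : ℕ) : ℤ) ∣ ((z+1 : ℕ) : ℤ) := by
    refine ⟨3*(3*(m₁:ℤ)+1)*(2*m₁+3) - x*(2*m₁+1) - y*(2*m₁+3) - z*(2*m₁+5), ?_⟩
    push_cast
    linear_combination hZint
  have hznat : (m₁+1) ∣ (z+1) := Int.natCast_dvd_natCast.mp hzd
  obtain ⟨jp, hjp⟩ := hznat
  have hjpne : jp ≠ 0 := by rintro rfl; simp at hjp
  obtain ⟨j, rfl⟩ : ∃ j, jp = j + 1 := ⟨jp - 1, by omega⟩
  have hzZ : (z : ℤ) + 1 = (m₁+1)*(j+1) := by exact_mod_cast congrArg (Nat.cast : ℕ → ℤ) hjp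
  have hyd : ((2*m₁+1 : ℕ) : ℤ) ∣ ((y + (m₁+2)*j + 1 : ℕ) : ℤ) := by
    refine ⟨8*(m₁:ℤ)^2+18*m₁+9 - ((m₁:ℤ)+2)^2*j - ((m₁:ℤ)+2)*y - ((m₁:ℤ)+1)*x, ?_⟩
    push_cast
    linear_combination hZint - ((m₁:ℤ)+2)*(2*m₁+3)*hzZ
  have hynat : (2*m₁+1) ∣ (y + (m₁+2)*j + 1) := Int.natCast_dvd_natCast.mp hyd
  obtain ⟨p, hp⟩ := hynat
  have hpne : p ≠ 0 := by rintro rfl; omega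
  have hpZ : (y : ℤ) + (m₁+2)*j + 1 = (2*m₁+1)*p := by
    exact_mod_cast congrArg (Nat.cast : ℕ → ℤ) hp
  have hp3 : p ≤ 3 := by
    by_contra hcon
    push_neg at hcon
    have key : (x:ℤ)*((m₁+1)*(2*m₁+1)) + (2*m₁+3)*(((m₁:ℤ)+1)*(2*m₁+1)*p + m₁^2 + m₁ - 1) + 1
        = 3*(m₁+1)*(3*m₁+1)*(2*m₁+3) := by
      linear_combination hZint - ((m₁:ℤ)+1)*(2*m₁+3)*hpZ - ((m₁:ℤ)+2)*(2*m₁+3)*hzZ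
    have hp4 : (4:ℤ) ≤ p := by exact_mod_cast hcon
    have hx0 : (0:ℤ) ≤ (x:ℤ)*((m₁+1)*(2*m₁+1)) := by positivity
    have h8' : (8:ℤ) ≤ (m₁:ℤ) := by exact_mod_cast h8
    have hmono : (2*(m₁:ℤ)+3)*(((m₁:ℤ)+1)*(2*m₁+1)*4) ≤ (2*(m₁:ℤ)+3)*(((m₁:ℤ)+1)*(2*m₁+1)*p) := by
      apply mul_le_mul_of_nonneg_left _ (by positivity)
      apply mul_le_mul_of_nonneg_left hp4 (by positivity)
    nlinarith [key, hmono, hx0, h8']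
  refine ⟨j, p, hjp, hp, by omega, hp3, ?_⟩
  have h1 : (2*m₁+1)*p ≤ (m₁+2)*(2*p) := by
    have : (2*m₁+1)*p ≤ (2*m₁+4)*p := Nat.mul_le_mul_right _ (by omega)
    have e : (2*m₁+4)*p = (m₁+2)*(2*p) := by ring
    omega
  have h2 : (m₁+2)*j < (m₁+2)*(2*p) := by omega
  have := Nat.lt_of_mul_lt_mul_left h2
  omega

def Todd : Finset (ℕ × ℕ) :=
  {(0,1),(1,1),(0,2),(1,2),(2,2),(3,2),(0,3),(1,3),(2,3),(3,3),(4,3),(5,3)}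

lemma odd_upper (m₁ : ℕ) (h8 : 8 ≤ m₁) :
    repCount ![(m₁+1)*(2*m₁+1), (m₁+1)*(2*m₁+3), (m₁+2)*(2*m₁+3)]
      (3*(m₁+1)*(3*m₁+1)*(2*m₁+3) - 1) ≤ 12 := by
  have hFpos : 1 ≤ 3*(m₁+1)*(3*m₁+1)*(2*m₁+3) := by
    have e : 3*(m₁+1)*(3*m₁+1)*(2*m₁+3) = 18*(m₁*m₁*m₁)+51*(m₁*m₁)+42*m₁+9 := by ring
    omega
  set F := 3*(m₁+1)*(3*m₁+1)*(2*m₁+3) - 1 with hF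
  have hcls : ∀ x y z : ℕ,
      x * ((m₁+1)*(2*m₁+1)) + y * ((m₁+1)*(2*m₁+3)) + z * ((m₁+2)*(2*m₁+3)) = F →
      ∃ j p, z + 1 = (m₁+1)*(j+1) ∧ y + (m₁+2)*j + 1 = (2*m₁+1)*p ∧ 1 ≤ p ∧ p ≤ 3 ∧
        j + 1 ≤ 2*p := by
    intro x y z hxyz
    exact odd_classify m₁ x y z h8 (by omega)
  have ha1 : 1 ≤ (m₁+1)*(2*m₁+1) := by
    have e : (m₁+1)*(2*m₁+1) = 2*(m₁*m₁) + 3*m₁ + 1 := by ring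
    omega
  apply repCount_le_12 _ _ _ _ ha1 Todd (by decide)
    (fun y z => ((z+1)/(m₁+1) - 1, (y + (m₁+2)*((z+1)/(m₁+1) - 1) + 1)/(2*m₁+1)))
  · intro x y z hxyz
    obtain ⟨j, p, hz, hp, hp1, hp3, hjp⟩ := hcls x y z hxyz
    have hdiv : (z+1)/(m₁+1) = j+1 := by
      rw [hz]; exact Nat.mul_div_cancel_left _ (by omega)
    rw [hdiv]
    simp only [Nat.add_sub_cancel]
    have hdiv2 : (y + (m₁+2)*j + 1)/(2*m₁+1) = p := by
      rw [hp]; exact Nat.mul_div_cancel_left _ (by omega)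
    rw [hdiv2]
    have hj5 : j ≤ 5 := by omega
    interval_cases j <;> interval_cases p <;> first | (exfalso; omega) | decide
  · intro x y z x' y' z' h h' htag
    obtain ⟨j, p, hz, hp, hp1, hp3, hjp⟩ := hcls x y z h
    obtain ⟨j', p', hz', hp', hp1', hp3', hjp'⟩ := hcls x' y' z' h'
    have hdiv : (z+1)/(m₁+1) = j+1 := by
      rw [hz]; exact Nat.mul_div_cancel_left _ (by omega)
    have hdiv' : (z'+1)/(m₁+1) = j'+1 := by
      rw [hz']; exact Nat.mul_div_cancel_left _ (by omega)
    have hdiv2 : (y + (m₁+2)*j + 1)/(2*m₁+1) = p := by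
      rw [hp]; exact Nat.mul_div_cancel_left _ (by omega)
    have hdiv2' : (y' + (m₁+2)*j' + 1)/(2*m₁+1) = p' := by
      rw [hp']; exact Nat.mul_div_cancel_left _ (by omega)
    rw [hdiv, hdiv'] at htag
    simp only [Nat.add_sub_cancel, Prod.mk.injEq] at htag
    obtain ⟨hj, htag2⟩ := htag
    subst hj
    rw [hdiv2, hdiv2'] at htag2
    subst htag2
    exact ⟨by omega, by omega⟩

/-- index data for the odd case -/
def oS (i : ℕ) : ℕ := if i = 0 then 3 else if i ≤ 2 then 2 else if i ≤ 6 then 1 else 0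
def oT (i : ℕ) : ℕ := if i = 0 then 0 else if i ≤ 2 then i-1 else if i ≤ 6 then i-3 else i-7
def oCY (v i : ℕ) : ℕ :=
  if i = 0 then 0 else if i = 1 then 2*v+17 else if i = 2 then v+7 else
  if i = 3 then 4*v+34 else if i = 4 then 3*v+24 else if i = 5 then 2*v+14 else
  if i = 6 then v+4 else if i = 7 then 6*v+51 else if i = 8 then 5*v+41 else
  if i = 9 then 4*v+31 else if i = 10 then 3*v+21 else if i = 11 then 2*v+11 else v+1

set_option maxHeartbeats 1000000 in
lemma oCY_inj (v i i' : ℕ) (h : i < 13) (h' : i' < 13) (hC : oCY v i = oCY v i') : i = i' := by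
  interval_cases i <;> interval_cases i' <;> norm_num [oCY] at hC <;> omega

set_option maxHeartbeats 1000000 in
lemma odd_tab (v y₀ z₀ D m₁ : ℕ) (hm₁ : m₁ = v + 8) :
    ∀ i : Fin 13,
      (D + oS i.val * (2*m₁+3)) * ((m₁+1)*(2*m₁+1))
      + (y₀ + oCY v i.val) * ((m₁+1)*(2*m₁+3))
      + (z₀ + (m₁+1)*oT i.val) * ((m₁+2)*(2*m₁+3))
      = y₀*((m₁+1)*(2*m₁+3)) + z₀*((m₁+2)*(2*m₁+3)) + ((m₁+1)*(2*m₁+1))*(3*(2*m₁+3)+D) := by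
  intro i
  fin_cases i <;> norm_num [oS, oT, oCY] <;> rw [hm₁] <;> ring

set_option maxHeartbeats 1000000 in
lemma odd_lower (m₁ : ℕ) (h8 : 8 ≤ m₁) (m : ℕ) (hm : 3*(m₁+1)*(3*m₁+1)*(2*m₁+3) ≤ m) :
    13 ≤ repCount ![(m₁+1)*(2*m₁+1), (m₁+1)*(2*m₁+3), (m₁+2)*(2*m₁+3)] m := by
  obtain ⟨v, rfl⟩ : ∃ v, m₁ = v + 8 := ⟨m₁ - 8, by omega⟩
  set m₁ := v + 8 with hm₁
  have hdm := Nat.div_add_mod m (m₁+1)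
  set q := m / (m₁+1) with hq
  set z₀ := m % (m₁+1) with hz0
  have hz₀ : z₀ ≤ m₁ := by
    have := Nat.mod_lt m (show 0 < m₁+1 by omega); omega
  have hqge : z₀*(2*m₁+5) ≤ q := by
    rw [hq, Nat.le_div_iff_mul_le (show 0 < m₁+1 by omega)]
    have h1 : z₀*(2*m₁+5)*(m₁+1) ≤ m₁*(2*m₁+5)*(m₁+1) :=
      Nat.mul_le_mul_right _ (Nat.mul_le_mul_right _ hz₀)
    have e1 : m₁*(2*m₁+5)*(m₁+1) = 2*(v*v*v) + 55*(v*v) + 501*v + 1512 := by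
      rw [hm₁]; ring
    have e2 : 3*(m₁+1)*(3*m₁+1)*(2*m₁+3) = 18*(v*v*v) + 483*(v*v) + 4314*v + 12825 := by
      rw [hm₁]; ring
    omega
  obtain ⟨u, hu⟩ : ∃ u, q = u + z₀*(2*m₁+5) := ⟨q - z₀*(2*m₁+5), by omega⟩
  rw [hu] at hdm
  have hmu : m = z₀*((m₁+2)*(2*m₁+3)) + (m₁+1)*u := by
    have e : (m₁+1)*(u + z₀*(2*m₁+5)) + z₀ = z₀*((m₁+2)*(2*m₁+3)) + (m₁+1)*u := by ring
    omega
  have hubig : 4*(m₁*m₁)+6*m₁ ≤ u := by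
    by_contra hcon
    push_neg at hcon
    have h1 : (m₁+1)*u ≤ (m₁+1)*(4*(m₁*m₁)+6*m₁) := Nat.mul_le_mul_left _ (by omega)
    have h2 : z₀*((m₁+2)*(2*m₁+3)) ≤ m₁*((m₁+2)*(2*m₁+3)) := Nat.mul_le_mul_right _ hz₀
    have e1 : (m₁+1)*(4*(m₁*m₁)+6*m₁) = 4*(v*v*v) + 106*(v*v) + 934*v + 2736 := by
      rw [hm₁]; ring
    have e2 : m₁*((m₁+2)*(2*m₁+3)) = 2*(v*v*v) + 55*(v*v) + 502*v + 1520 := by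
      rw [hm₁]; ring
    have e3 : 3*(m₁+1)*(3*m₁+1)*(2*m₁+3) = 18*(v*v*v) + 483*(v*v) + 4314*v + 12825 := by
      rw [hm₁]; ring
    omega
  -- second division
  have hdm2 := Nat.div_add_mod ((m₁+1)*u) (2*m₁+1)
  set W := (m₁+1)*u / (2*m₁+1) with hW
  set y₀ := (m₁+1)*u % (2*m₁+1) with hy0
  have hy₀ : y₀ ≤ 2*m₁ := by
    have := Nat.mod_lt ((m₁+1)*u) (show 0 < 2*m₁+1 by omega); omega
  have h2u : (2*m₁+2)*u = (2*m₁+1)*(2*W) + 2*y₀ := by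
    have e1 : (2*m₁+2)*u = 2*((m₁+1)*u) := by ring
    have e2 : (2*m₁+1)*(2*W) = 2*((2*m₁+1)*W) := by ring
    omega
  have hmsq : 8*m₁ ≤ m₁*m₁ := Nat.mul_le_mul_right m₁ h8
  have hWu : u ≤ 2*W := by
    by_contra hcon
    push_neg at hcon
    obtain ⟨u', hu'⟩ : ∃ u', u = u' + 1 := ⟨u - 1, by omega⟩
    have h1 : (2*m₁+1)*(2*W) ≤ (2*m₁+1)*u' := Nat.mul_le_mul_left _ (by omega)
    have e : (2*m₁+1)*(u'+1) = (2*m₁+1)*u' + (2*m₁+1) := by ring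
    have e2 : (2*m₁+2)*(u'+1) = (2*m₁+1)*(u'+1) + (u'+1) := by ring
    rw [hu'] at hcon h2u hubig
    omega
  obtain ⟨V, hV⟩ : ∃ V, 2*W = u + V := ⟨2*W - u, by omega⟩
  rw [hV] at h2u
  have huV : u = (2*m₁+1)*V + 2*y₀ := by
    have e : (2*m₁+1)*(u+V) = (2*m₁+1)*u + (2*m₁+1)*V := by ring
    have e2 : (2*m₁+2)*u = (2*m₁+1)*u + u := by ring
    omega
  have hVy : y₀ ≤ V := by
    by_contra hcon
    push_neg at hcon
    have h1 : (2*m₁+1)*V ≤ (2*m₁+1)*(2*m₁-1) := Nat.mul_le_mul_left _ (by omega)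
    have e1 : (2*m₁+1)*(2*m₁-1) = 4*(v*v) + 64*v + 255 := by
      rw [hm₁]
      have e : 2*(v+8)-1 = 2*v+15 := by omega
      rw [e]; ring
    have e2 : m₁*m₁ = v*v + 16*v + 64 := by rw [hm₁]; ring
    omega
  obtain ⟨M, hM⟩ : ∃ M, V = M + y₀ := ⟨V - y₀, by omega⟩
  rw [hM] at huV
  have hmfull : m = y₀*((m₁+1)*(2*m₁+3)) + z₀*((m₁+2)*(2*m₁+3)) + ((m₁+1)*(2*m₁+1))*M := by
    have e1 : (m₁+1)*((2*m₁+1)*(M+y₀) + 2*y₀) =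
        y₀*((m₁+1)*(2*m₁+3)) + ((m₁+1)*(2*m₁+1))*M := by ring
    have e2 : (m₁+1)*u = (m₁+1)*((2*m₁+1)*(M+y₀) + 2*y₀) := by rw [← huV]
    omega
  have hMbig : 6*m₁+9 ≤ M := by
    by_contra hcon
    push_neg at hcon
    have h1 : ((m₁+1)*(2*m₁+1))*M ≤ ((m₁+1)*(2*m₁+1))*(6*m₁+8) := Nat.mul_le_mul_left _ (by omega)
    have h2 : y₀*((m₁+1)*(2*m₁+3)) ≤ 2*m₁*((m₁+1)*(2*m₁+3)) := Nat.mul_le_mul_right _ hy₀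
    have h3 : z₀*((m₁+2)*(2*m₁+3)) ≤ m₁*((m₁+2)*(2*m₁+3)) := Nat.mul_le_mul_right _ hz₀
    have e1 : 2*m₁*((m₁+1)*(2*m₁+3)) = 4*(v*v*v) + 106*(v*v) + 934*v + 2736 := by
      rw [hm₁]; ring
    have e2 : m₁*((m₁+2)*(2*m₁+3)) = 2*(v*v*v) + 55*(v*v) + 502*v + 1520 := by
      rw [hm₁]; ring
    have e3 : ((m₁+1)*(2*m₁+1))*(6*m₁+8) = 12*(v*v*v) + 322*(v*v) + 2878*v + 8568 := by
      rw [hm₁]; ring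
    have e4 : 3*(m₁+1)*(3*m₁+1)*(2*m₁+3) = 18*(v*v*v) + 483*(v*v) + 4314*v + 12825 := by
      rw [hm₁]; ring
    omega
  obtain ⟨D, hD⟩ : ∃ D, M = 3*(2*m₁+3) + D := ⟨M - (6*m₁+9), by omega⟩
  rw [hD] at hmfull
  clear hdm hqge hu hmu hubig hdm2 hWu hV huV hVy hM hMbig hm h2u hmsq hq hz0 hW hy0 hD
  apply repCount_ge_13 _ _ _ _ (by nlinarith) (by nlinarith) (by nlinarith)
    (fun i => D + oS i.val * (2*m₁+3))
    (fun i => y₀ + oCY v i.val)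
    (fun i => z₀ + (m₁+1)*(oT i.val))
  · intro i
    rw [hmfull]
    exact odd_tab v y₀ z₀ D m₁ hm₁ i
  · intro i i' hY hZ
    exact Fin.ext (oCY_inj v _ _ i.isLt i'.isLt (by omega))

lemma t_odd0 (m₁ : ℕ) : t (2*m₁+1) = (m₁+1)*(2*m₁+1) := by
  rw [t, show (2*m₁+1)*(2*m₁+1+1) = 2*((m₁+1)*(2*m₁+1)) from by ring,
    Nat.mul_div_cancel_left _ two_pos]

lemma t_odd1 (m₁ : ℕ) : t (2*m₁+1+1) = (m₁+1)*(2*m₁+3) := by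
  rw [t, show (2*m₁+1+1)*(2*m₁+1+1+1) = 2*((m₁+1)*(2*m₁+3)) from by ring,
    Nat.mul_div_cancel_left _ two_pos]

lemma t_odd2 (m₁ : ℕ) : t (2*m₁+1+2) = (m₁+2)*(2*m₁+3) := by
  rw [t, show (2*m₁+1+2)*(2*m₁+1+2+1) = 2*((m₁+2)*(2*m₁+3)) from by ring,
    Nat.mul_div_cancel_left _ two_pos]

lemma odd_part (n : ℕ) (ho : Odd n) (h17 : 17 ≤ n) :
    genFrob ![t n, t (n + 1), t (n + 2)] 12 =
      ((n : ℤ) + 1) * ((n : ℤ) + 2) * (9 * (n : ℤ) - 3) / 4 - 1 := by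
  obtain ⟨m₁, rfl⟩ : ∃ m₁, n = 2*m₁+1 := by
    obtain ⟨r, hr⟩ := ho; exact ⟨r, by omega⟩
  have h8 : 8 ≤ m₁ := by omega
  have hFpos : 1 ≤ 3*(m₁+1)*(3*m₁+1)*(2*m₁+3) := by
    have e : 3*(m₁+1)*(3*m₁+1)*(2*m₁+3) = 18*(m₁*m₁*m₁)+51*(m₁*m₁)+42*m₁+9 := by ring
    omega
  have hmain : genFrob ![t (2*m₁+1), t (2*m₁+1 + 1), t (2*m₁+1 + 2)] 12
      = ((3*(m₁+1)*(3*m₁+1)*(2*m₁+3) - 1 : ℕ) : ℤ) := by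
    rw [t_odd0, t_odd1, t_odd2]
    apply genFrob_eq_of_s18
    · exact odd_upper m₁ h8
    · intro m hm
      have := odd_lower m₁ h8 m (by omega)
      omega
  rw [hmain]
  have e1 : (((2*m₁+1 : ℕ) : ℤ) + 1) * (((2*m₁+1 : ℕ) : ℤ) + 2) * (9 * ((2*m₁+1 : ℕ) : ℤ) - 3)
      = 4 * (3*((m₁:ℤ)+1)*(3*(m₁:ℤ)+1)*(2*(m₁:ℤ)+3)) := by push_cast; ring
  rw [e1, Int.mul_ediv_cancel_left _ (by norm_num)]
  push_cast [hFpos]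
  ring

/-- `g(t_n, t_{n+1}, t_{n+2}; 12) = ((n+1)(n+2)/4)(9n) - 1` for even `n ≥ 14`, and
`g(t_n, t_{n+1}, t_{n+2}; 12) = ((n+1)(n+2)/4)(9n - 3) - 1` for odd `n ≥ 17`. -/
theorem stmt_18 :
    (∀ n : ℕ, Even n → 14 ≤ n →
      genFrob ![t n, t (n + 1), t (n + 2)] 12 =
        ((n : ℤ) + 1) * ((n : ℤ) + 2) * (9 * (n : ℤ)) / 4 - 1) ∧
    (∀ n : ℕ, Odd n → 17 ≤ n →
      genFrob ![t n, t (n + 1), t (n + 2)] 12 =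
        ((n : ℤ) + 1) * ((n : ℤ) + 2) * (9 * (n : ℤ) - 3) / 4 - 1) := by
  exact ⟨even_part, odd_part⟩
end

section
/- For the generalized Frobenius number of three consecutive triangular numbers with s = 16: g(t_n, t_{n+1}, t_{n+2}; 16) = ((n+1)(n+2)/4)·(10n) − 1 for n = 17 and for every integer n ≥ 19. -/
open Finset

/- ===================== auxiliary development ===================== -/

private lemma two_t (r : ℕ) : 2 * t r = r * (r + 1) := by
  unfold t
  exact Nat.mul_div_cancel' r.even_mul_succ_self.two_dvd

private lemma t_step (r : ℕ) : t r + (r + 1) = t (r + 1) := by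
  have h1 := two_t r
  have h2 := two_t (r + 1)
  have e : r * (r + 1) + 2 * (r + 1) = (r + 1) * (r + 1 + 1) := by ring
  linarith

/-- Lower bound: for every `m > F` there are at least 17 representations. -/
private lemma lowerAux
    (n a b c P Q alf bet M F pa qa : ℕ)
    (h1 : a + (n + 1) = b) (h2 : b + (n + 2) = c)
    (hPQ : P * Q = b) (hαQ : alf * Q = n + 1) (hβP : bet * P = n + 2)
    (hpa : pa + 1 = P) (hqa : qa + 1 = Q)
    (hcop : Nat.Coprime P Q)
    (hF : M * b + pa * a + qa * c = F)
    (hPF : 8 * P ≤ F) (hQF : 7 * Q ≤ F) (hαb : 8 * (alf * b) ≤ F) (hb2 : 2 ≤ b)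
    (pairs : Finset (ℕ × ℕ)) (hcard : 17 ≤ pairs.card)
    (hpair : ∀ pr ∈ pairs,
      pr.1 * P + pr.2 * (Q + bet) ≤ M + 1 + pr.1 * alf ∧ pr.1 ≤ 7 ∧ pr.2 ≤ 6)
    (m : ℕ) (hm : F < m) :
    17 ≤ repCount ![a, b, c] m := by
  classical
  have hP0 : 0 < P := by omega
  have hQ0 : 0 < Q := by omega
  set x0 := m % P with hx0def
  set z0 := m % Q with hz0def
  have hx0 : x0 ≤ pa := by
    have := Nat.mod_lt m hP0; omega
  have hz0 : z0 ≤ qa := by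
    have := Nat.mod_lt m hQ0; omega
  have hdmP : P * (m / P) + x0 = m := Nat.div_add_mod m P
  have hdmQ : Q * (m / Q) + z0 = m := Nat.div_add_mod m Q
  have hqaF : qa * c ≤ F := by
    have : qa * c ≤ M * b + pa * a + qa * c := Nat.le_add_left _ _
    omega
  have hz0m : z0 * (n + 2) ≤ m := by
    have g1 : z0 * (n + 2) ≤ qa * c := Nat.mul_le_mul hz0 (by omega)
    omega
  -- integer casts of the hypotheses
  have h1' : (a : ℤ) + ((n : ℤ) + 1) = b := by exact_mod_cast h1
  have h2' : (b : ℤ) + ((n : ℤ) + 2) = c := by exact_mod_cast h2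
  have hPQ' : (P : ℤ) * Q = b := by exact_mod_cast hPQ
  have hαQ' : (alf : ℤ) * Q = (n : ℤ) + 1 := by exact_mod_cast hαQ
  have hβP' : (bet : ℤ) * P = (n : ℤ) + 2 := by exact_mod_cast hβP
  have hdmP' : (P : ℤ) * ((m / P : ℕ) : ℤ) + (x0 : ℤ) = m := by exact_mod_cast hdmP
  have hdmQ' : (Q : ℤ) * ((m / Q : ℕ) : ℤ) + (z0 : ℤ) = m := by exact_mod_cast hdmQ
  have hWP : (P : ℤ) ∣ ((m : ℤ) + x0 * ((n : ℤ) + 1) - z0 * ((n : ℤ) + 2)) :=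
    ⟨((m / P : ℕ) : ℤ) + x0 * bet - z0 * bet, by
      linear_combination (-1 : ℤ) * hdmP' - ((x0 : ℤ) - z0) * hβP'⟩
  have hWQ : (Q : ℤ) ∣ ((m : ℤ) + x0 * ((n : ℤ) + 1) - z0 * ((n : ℤ) + 2)) :=
    ⟨((m / Q : ℕ) : ℤ) + x0 * alf - z0 * alf, by
      linear_combination (-1 : ℤ) * hdmQ' - ((x0 : ℤ) - z0) * hαQ'⟩
  have hcopZ : IsCoprime (P : ℤ) (Q : ℤ) := by
    rw [Nat.isCoprime_iff_coprime]; exact hcop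
  have hWb : (b : ℤ) ∣ ((m : ℤ) + x0 * ((n : ℤ) + 1) - z0 * ((n : ℤ) + 2)) := by
    rw [← hPQ']; exact hcopZ.mul_dvd hWP hWQ
  obtain ⟨w, hw⟩ := hWb
  have hz0m' : (z0 : ℤ) * ((n : ℤ) + 2) ≤ m := by exact_mod_cast hz0m
  have hb0' : (0 : ℤ) < b := by exact_mod_cast (by omega : 0 < b)
  have hx0n' : (0 : ℤ) ≤ (x0 : ℤ) * ((n : ℤ) + 1) := by positivity
  have hwpos : 0 ≤ w := by
    rcases le_or_gt 0 w with h | h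
    · exact h
    · exfalso
      have hble : (b : ℤ) * w ≤ (b : ℤ) * (-1) :=
        mul_le_mul_of_nonneg_left (by omega) (le_of_lt hb0')
      linarith
  set T0 := w.toNat with hT0def
  have hT0w : (T0 : ℤ) = w := Int.toNat_of_nonneg hwpos
  have ET0 : T0 * b + z0 * (n + 2) = m + x0 * (n + 1) := by
    have : (T0 : ℤ) * b + z0 * ((n : ℤ) + 2) = m + x0 * ((n : ℤ) + 1) := by
      rw [hT0w]; linear_combination -hw
    exact_mod_cast this
  have hT0big : x0 + z0 + M + 1 ≤ T0 := by
    by_contra hcon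
    push_neg at hcon
    have h5 : T0 * b ≤ (x0 + z0 + M) * b := Nat.mul_le_mul_right _ (by omega)
    have e5 : (x0 + z0 + M) * b + z0 * (n + 2) = M * b + x0 * a + x0 * (n + 1) + z0 * c := by
      have hbb : b = a + (n + 1) := by omega
      have hcc : c = a + (n + 1) + (n + 2) := by omega
      rw [hbb, hcc]; ring
    have h7 : x0 * a ≤ pa * a := Nat.mul_le_mul_right _ hx0
    have h8 : z0 * c ≤ qa * c := Nat.mul_le_mul_right _ hz0
    linarith [ET0]
  have hPn : P * (n + 1) = alf * b := by rw [← hPQ, ← hαQ]; ring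
  have hx0nb : x0 * (n + 1) ≤ alf * b := by
    calc x0 * (n + 1) ≤ P * (n + 1) := Nat.mul_le_mul_right _ (by omega)
      _ = alf * b := hPn
  have hT0le : T0 * b ≤ m + alf * b := by linarith [ET0, Nat.zero_le (z0 * (n + 2))]
  -- bounds for each pair
  have hbound : ∀ pr ∈ pairs, x0 + pr.1 * P ≤ m ∧ z0 + pr.2 * Q ≤ m ∧
      x0 + pr.1 * P + (z0 + pr.2 * Q) + pr.2 * bet ≤ T0 + pr.1 * alf := by
    intro pr hpr
    obtain ⟨hc1, hi7, hj6⟩ := hpair pr hpr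
    have e : pr.2 * (Q + bet) = pr.2 * Q + pr.2 * bet := by ring
    rw [e] at hc1
    have hx : x0 + pr.1 * P ≤ m := by
      have h9 : pr.1 * P ≤ 7 * P := Nat.mul_le_mul_right _ hi7
      linarith
    have hz : z0 + pr.2 * Q ≤ m := by
      have h9 : pr.2 * Q ≤ 6 * Q := Nat.mul_le_mul_right _ hj6
      linarith
    exact ⟨hx, hz, by linarith⟩
  have hymle : ∀ pr ∈ pairs,
      T0 + pr.1 * alf - (x0 + pr.1 * P + (z0 + pr.2 * Q) + pr.2 * bet) ≤ m := by
    intro pr hpr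
    obtain ⟨hc1, hi7, hj6⟩ := hpair pr hpr
    have h9 : T0 + pr.1 * alf - (x0 + pr.1 * P + (z0 + pr.2 * Q) + pr.2 * bet)
        ≤ T0 + 7 * alf := by
      have : pr.1 * alf ≤ 7 * alf := Nat.mul_le_mul_right _ hi7
      omega
    by_contra hc
    push_neg at hc
    have h10 : (m + 1) * b ≤ (T0 + 7 * alf) * b := Nat.mul_le_mul_right _ (by omega)
    have e10 : (T0 + 7 * alf) * b = T0 * b + 7 * (alf * b) := by ring
    have e11 : (m + 1) * b = m * b + b := by ring
    have h12 : 2 * m ≤ m * b := by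
      calc 2 * m = m * 2 := by ring
        _ ≤ m * b := Nat.mul_le_mul_left _ hb2
    linarith
  set fmap : ℕ × ℕ → (Fin 3 → Fin (m + 1)) := fun pr =>
    ![⟨min (x0 + pr.1 * P) m, Nat.lt_succ_of_le (min_le_right _ _)⟩,
      ⟨min (T0 + pr.1 * alf - (x0 + pr.1 * P + (z0 + pr.2 * Q) + pr.2 * bet)) m,
        Nat.lt_succ_of_le (min_le_right _ _)⟩,
      ⟨min (z0 + pr.2 * Q) m, Nat.lt_succ_of_le (min_le_right _ _)⟩] with hfmap
  have hmem : ∀ pr ∈ pairs, fmap pr ∈ Finset.univ.filter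
      (fun v : Fin 3 → Fin (m + 1) => ∑ i, ![a, b, c] i * (v i : ℕ) = m) := by
    intro pr hpr
    obtain ⟨hxm, hzm, hyadd⟩ := hbound pr hpr
    have hym := hymle pr hpr
    rw [Finset.mem_filter]
    refine ⟨Finset.mem_univ _, ?_⟩
    have hyeq : (T0 + pr.1 * alf - (x0 + pr.1 * P + (z0 + pr.2 * Q) + pr.2 * bet))
        + (x0 + pr.1 * P + (z0 + pr.2 * Q) + pr.2 * bet) = T0 + pr.1 * alf :=
      Nat.sub_add_cancel hyadd
    have hsum : a * (x0 + pr.1 * P)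
        + b * (T0 + pr.1 * alf - (x0 + pr.1 * P + (z0 + pr.2 * Q) + pr.2 * bet))
        + c * (z0 + pr.2 * Q) = m := by
      have e_y' : ((T0 + pr.1 * alf - (x0 + pr.1 * P + (z0 + pr.2 * Q) + pr.2 * bet) : ℕ) : ℤ)
          + ((x0 : ℤ) + (pr.1 : ℤ) * P + ((z0 : ℤ) + (pr.2 : ℤ) * Q) + (pr.2 : ℤ) * bet)
          = (T0 : ℤ) + (pr.1 : ℤ) * alf := by exact_mod_cast hyeq
      have e_T' : (T0 : ℤ) * b + (z0 : ℤ) * ((n : ℤ) + 2)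
          = (m : ℤ) + (x0 : ℤ) * ((n : ℤ) + 1) := by exact_mod_cast ET0
      have : (a : ℤ) * ((x0 : ℤ) + (pr.1 : ℤ) * P)
          + (b : ℤ) * ((T0 + pr.1 * alf - (x0 + pr.1 * P + (z0 + pr.2 * Q) + pr.2 * bet) : ℕ) : ℤ)
          + (c : ℤ) * ((z0 : ℤ) + (pr.2 : ℤ) * Q) = (m : ℤ) := by
        linear_combination (b : ℤ) * e_y' + e_T'
          + ((x0 : ℤ) + (pr.1 : ℤ) * P) * h1' - ((z0 : ℤ) + (pr.2 : ℤ) * Q) * h2'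
          + (pr.1 : ℤ) * ((P : ℤ) * hαQ' - (alf : ℤ) * hPQ')
          + (pr.2 : ℤ) * ((bet : ℤ) * hPQ' - (Q : ℤ) * hβP')
      exact_mod_cast this
    show (∑ i, ![a, b, c] i * ((fmap pr) i : ℕ)) = m
    rw [Fin.sum_univ_three]
    simp only [hfmap, Matrix.cons_val_zero, Matrix.cons_val_one, Matrix.head_cons,
      Matrix.cons_val_two, Matrix.tail_cons]
    rw [min_eq_left hxm, min_eq_left hym, min_eq_left hzm]
    exact hsum
  have hinj : Set.InjOn fmap pairs := by
    intro p hp q hq heq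
    obtain ⟨hxp, hzp, _⟩ := hbound p hp
    obtain ⟨hxq, hzq, _⟩ := hbound q hq
    have e0 : ((fmap p 0 : Fin (m + 1)) : ℕ) = ((fmap q 0 : Fin (m + 1)) : ℕ) := by rw [heq]
    have e2 : ((fmap p 2 : Fin (m + 1)) : ℕ) = ((fmap q 2 : Fin (m + 1)) : ℕ) := by rw [heq]
    simp only [hfmap, Matrix.cons_val_zero, Matrix.cons_val_two, Matrix.tail_cons,
      Matrix.head_cons] at e0 e2
    rw [min_eq_left hxp, min_eq_left hxq] at e0
    rw [min_eq_left hzp, min_eq_left hzq] at e2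
    have e0' : p.1 * P = q.1 * P := by omega
    have e2' : p.2 * Q = q.2 * Q := by omega
    have g1 : p.1 = q.1 := Nat.eq_of_mul_eq_mul_right hP0 e0'
    have g2 : p.2 = q.2 := Nat.eq_of_mul_eq_mul_right hQ0 e2'
    exact Prod.ext g1 g2
  calc (17 : ℕ) ≤ pairs.card := hcard
    _ ≤ _ := Finset.card_le_card_of_injOn fmap hmem hinj

/-- Upper bound: `F` itself has at most 16 representations. -/
private lemma upperAux
    (n a b c P Q alf bet M F pa qa : ℕ)
    (h1 : a + (n + 1) = b) (h2 : b + (n + 2) = c)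
    (hPQ : P * Q = b) (hαQ : alf * Q = n + 1) (hβP : bet * P = n + 2)
    (hpa : pa + 1 = P) (hqa : qa + 1 = Q)
    (hF : M * b + pa * a + qa * c = F)
    (hFb : b ∣ F + 1) (hb1 : 1 ≤ b)
    (pairs : Finset (ℕ × ℕ)) (hcard : pairs.card ≤ 16)
    (hclass : ∀ i j : ℕ, i * P + j * (Q + bet) ≤ M + i * alf → (i, j) ∈ pairs) :
    repCount ![a, b, c] F ≤ 16 := by
  classical
  have hP0 : 0 < P := by omega
  have hQ0 : 0 < Q := by omega
  obtain ⟨fq, hfq⟩ := hFb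
  have h1' : (a : ℤ) + ((n : ℤ) + 1) = b := by exact_mod_cast h1
  have h2' : (b : ℤ) + ((n : ℤ) + 2) = c := by exact_mod_cast h2
  have hPQ' : (P : ℤ) * Q = b := by exact_mod_cast hPQ
  have hαQ' : (alf : ℤ) * Q = (n : ℤ) + 1 := by exact_mod_cast hαQ
  have hβP' : (bet : ℤ) * P = (n : ℤ) + 2 := by exact_mod_cast hβP
  have hfq' : (F : ℤ) + 1 = (b : ℤ) * fq := by exact_mod_cast hfq
  have hF' : (M : ℤ) * b + (pa : ℤ) * a + (qa : ℤ) * c = F := by exact_mod_cast hF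
  have main : ∀ v : Fin 3 → Fin (F + 1), (∑ i, ![a, b, c] i * (v i : ℕ)) = F →
      ∃ i j : ℕ, (v 0 : ℕ) = i * P + pa ∧ (v 2 : ℕ) = j * Q + qa ∧
        ((v 0 : ℕ) + (v 1 : ℕ) + (v 2 : ℕ)) + j * bet = M + pa + qa + i * alf := by
    intro v hv
    rw [Fin.sum_univ_three] at hv
    simp only [Matrix.cons_val_zero, Matrix.cons_val_one, Matrix.head_cons,
      Matrix.cons_val_two, Matrix.tail_cons] at hv
    set x := (v 0 : ℕ) with hxdef
    set y := (v 1 : ℕ) with hydef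
    set z := (v 2 : ℕ) with hzdef
    have hsum' : (a : ℤ) * x + (b : ℤ) * y + (c : ℤ) * z = F := by exact_mod_cast hv
    have ET' : ((x : ℤ) + y + z) * b + (z : ℤ) * ((n : ℤ) + 2)
        = (F : ℤ) + (x : ℤ) * ((n : ℤ) + 1) := by
      linear_combination hsum' - (x : ℤ) * h1' + (z : ℤ) * h2'
    have hPx : (P : ℤ) ∣ (x : ℤ) + 1 :=
      ⟨(Q : ℤ) * fq + (x : ℤ) * bet - ((x : ℤ) + y + z) * Q - (z : ℤ) * bet, by
        linear_combination hfq' + ET' + ((x : ℤ) + y + z - (fq : ℤ)) * hPQ'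
          - ((x : ℤ) - z) * hβP'⟩
    have hQz : (Q : ℤ) ∣ (z : ℤ) + 1 :=
      ⟨(P : ℤ) * fq + (x : ℤ) * alf - ((x : ℤ) + y + z) * P - (z : ℤ) * alf, by
        linear_combination hfq' + ET' + ((x : ℤ) + y + z - (fq : ℤ)) * hPQ'
          - ((x : ℤ) - z) * hαQ'⟩
    have hPx' : P ∣ x + 1 := by exact_mod_cast hPx
    have hQz' : Q ∣ z + 1 := by exact_mod_cast hQz
    obtain ⟨si, hsi⟩ := hPx'
    obtain ⟨sj, hsj⟩ := hQz'
    obtain ⟨i, rfl⟩ : ∃ i, si = i + 1 := by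
      refine ⟨si - 1, ?_⟩
      rcases Nat.eq_zero_or_pos si with h | h
      · rw [h, mul_zero] at hsi; omega
      · omega
    obtain ⟨j, rfl⟩ : ∃ j, sj = j + 1 := by
      refine ⟨sj - 1, ?_⟩
      rcases Nat.eq_zero_or_pos sj with h | h
      · rw [h, mul_zero] at hsj; omega
      · omega
    have hxi : x = i * P + pa := by
      have e : P * (i + 1) = i * P + P := by ring
      rw [e] at hsi
      omega
    have hzj : z = j * Q + qa := by
      have e : Q * (j + 1) = j * Q + Q := by ring
      rw [e] at hsj
      omega
    refine ⟨i, j, hxi, hzj, ?_⟩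
    have hx' : (x : ℤ) = (i : ℤ) * P + pa := by exact_mod_cast hxi
    have hz' : (z : ℤ) = (j : ℤ) * Q + qa := by exact_mod_cast hzj
    have hTb : ((x + y + z) + j * bet) * b = (M + pa + qa + i * alf) * b := by
      have : (((x : ℤ) + y + z) + (j : ℤ) * bet) * b
          = ((M : ℤ) + pa + qa + (i : ℤ) * alf) * b := by
        linear_combination ET' + ((n : ℤ) + 1) * hx' - ((n : ℤ) + 2) * hz' - hF'
          + (pa : ℤ) * h1' - (qa : ℤ) * h2'
          + (i : ℤ) * ((alf : ℤ) * hPQ' - (P : ℤ) * hαQ')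
          + (j : ℤ) * ((Q : ℤ) * hβP' - (bet : ℤ) * hPQ')
      exact_mod_cast this
    exact Nat.eq_of_mul_eq_mul_right (by omega) hTb
  unfold repCount
  refine le_trans (Finset.card_le_card_of_injOn
    (fun v => (((v 0 : ℕ) + 1) / P - 1, ((v 2 : ℕ) + 1) / Q - 1)) ?_ ?_) hcard
  · intro v hv
    rw [Finset.mem_coe, Finset.mem_filter] at hv
    obtain ⟨i, j, hx, hz, hT⟩ := main v hv.2
    show (((v 0 : ℕ) + 1) / P - 1, ((v 2 : ℕ) + 1) / Q - 1) ∈ pairs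
    have hdx : ((v 0 : ℕ) + 1) / P = i + 1 := by
      have e : (v 0 : ℕ) + 1 = P * (i + 1) := by
        have e2 : P * (i + 1) = i * P + P := by ring
        omega
      rw [e, Nat.mul_div_cancel_left _ hP0]
    have hdz : ((v 2 : ℕ) + 1) / Q = j + 1 := by
      have e : (v 2 : ℕ) + 1 = Q * (j + 1) := by
        have e2 : Q * (j + 1) = j * Q + Q := by ring
        omega
      rw [e, Nat.mul_div_cancel_left _ hQ0]
    have hcon : i * P + j * (Q + bet) ≤ M + i * alf := by
      have hxz : (v 0 : ℕ) + (v 2 : ℕ) ≤ (v 0 : ℕ) + (v 1 : ℕ) + (v 2 : ℕ) := by omega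
      have e : j * (Q + bet) = j * Q + j * bet := by ring
      rw [e]
      linarith
    rw [hdx, hdz]
    simpa using hclass i j hcon
  · intro v hv w hw heq
    rw [Finset.mem_coe, Finset.mem_filter] at hv hw
    obtain ⟨i, j, hx, hz, hT⟩ := main v hv.2
    obtain ⟨i', j', hx', hz', hT'⟩ := main w hw.2
    have hdx : ((v 0 : ℕ) + 1) / P = i + 1 := by
      have e : (v 0 : ℕ) + 1 = P * (i + 1) := by
        have e2 : P * (i + 1) = i * P + P := by ring
        omega
      rw [e, Nat.mul_div_cancel_left _ hP0]
    have hdz : ((v 2 : ℕ) + 1) / Q = j + 1 := by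
      have e : (v 2 : ℕ) + 1 = Q * (j + 1) := by
        have e2 : Q * (j + 1) = j * Q + Q := by ring
        omega
      rw [e, Nat.mul_div_cancel_left _ hQ0]
    have hdx' : ((w 0 : ℕ) + 1) / P = i' + 1 := by
      have e : (w 0 : ℕ) + 1 = P * (i' + 1) := by
        have e2 : P * (i' + 1) = i' * P + P := by ring
        omega
      rw [e, Nat.mul_div_cancel_left _ hP0]
    have hdz' : ((w 2 : ℕ) + 1) / Q = j' + 1 := by
      have e : (w 2 : ℕ) + 1 = Q * (j' + 1) := by
        have e2 : Q * (j' + 1) = j' * Q + Q := by ring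
        omega
      rw [e, Nat.mul_div_cancel_left _ hQ0]
    have heq1 : i = i' := by
      have := congrArg Prod.fst heq
      simp only [hdx, hdx'] at this
      omega
    have heq2 : j = j' := by
      have := congrArg Prod.snd heq
      simp only [hdz, hdz'] at this
      omega
    subst heq1; subst heq2
    have g0 : (v 0 : ℕ) = (w 0 : ℕ) := by omega
    have g2 : (v 2 : ℕ) = (w 2 : ℕ) := by omega
    have g1 : (v 1 : ℕ) = (w 1 : ℕ) := by omega
    funext tIdx
    fin_cases tIdx
    · exact Fin.val_injective g0
    · exact Fin.val_injective g1
    · exact Fin.val_injective g2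

private def pairsE17 : Finset (ℕ × ℕ) :=
  {(0,0),(1,0),(2,0),(3,0),(4,0),(5,0),(6,0),(7,0),(0,1),(1,1),(2,1),(3,1),(4,1),
   (0,2),(1,2),(2,2),(0,3)}

private def pairsE16 : Finset (ℕ × ℕ) :=
  {(0,0),(1,0),(2,0),(3,0),(4,0),(5,0),(6,0),(0,1),(1,1),(2,1),(3,1),(4,1),
   (0,2),(1,2),(2,2),(0,3)}

private def pairsO17 : Finset (ℕ × ℕ) :=
  {(0,0),(1,0),(2,0),(3,0),(0,1),(1,1),(2,1),(3,1),(0,2),(1,2),(2,2),(0,3),(1,3),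
   (0,4),(1,4),(0,5),(0,6)}

private def pairsO16 : Finset (ℕ × ℕ) :=
  {(0,0),(1,0),(2,0),(3,0),(0,1),(1,1),(2,1),(0,2),(1,2),(2,2),(0,3),(1,3),
   (0,4),(1,4),(0,5),(0,6)}

set_option maxHeartbeats 1000000 in
private lemma keyBounds (n : ℕ) (hn : n = 17 ∨ 19 ≤ n) :
    repCount ![t n, t (n + 1), t (n + 2)] (5 * n * t (n + 1) - 1) ≤ 16 ∧
    ∀ m, 5 * n * t (n + 1) - 1 < m → 17 ≤ repCount ![t n, t (n + 1), t (n + 2)] m := by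
  rcases Nat.even_or_odd n with he | ho
  · -- n even, n ≥ 20, n = k + k with k ≥ 10
    obtain ⟨k, hk⟩ := he
    have hk10 : 10 ≤ k := by omega
    subst hk
    have h1 : t (k + k) + ((k + k) + 1) = t (k + k + 1) := t_step (k + k)
    have h2 : t (k + k + 1) + ((k + k) + 2) = t (k + k + 2) := by
      have h := t_step (k + k + 1)
      have e : k + k + 1 + 1 = k + k + 2 := by omega
      rw [e] at h
      omega
    have ha : t (k + k) = k * (2 * k + 1) := by
      have h := two_t (k + k)
      have e : (k + k) * (k + k + 1) = 2 * (k * (2 * k + 1)) := by ring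
      linarith
    have hb : t (k + k + 1) = (k + 1) * (2 * k + 1) := by
      have h := two_t (k + k + 1)
      have e : (k + k + 1) * (k + k + 1 + 1) = 2 * ((k + 1) * (2 * k + 1)) := by ring
      linarith
    have hc : t (k + k + 2) = (k + 1) * (2 * k + 3) := by
      have h := two_t (k + k + 2)
      have e : (k + k + 2) * (k + k + 2 + 1) = 2 * ((k + 1) * (2 * k + 3)) := by ring
      linarith
    have hTlb : k + 1 ≤ t (k + k + 1) := by
      rw [hb]
      have h := Nat.mul_le_mul (le_refl (k + 1)) (show 1 ≤ 2 * k + 1 by omega)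
      linarith
    have hT2 : 2 * k + 1 ≤ t (k + k + 1) := by
      rw [hb]
      have h := Nat.mul_le_mul (show 1 ≤ k + 1 by omega) (le_refl (2 * k + 1))
      linarith
    obtain ⟨M, hM⟩ : ∃ M, M + 1 = 7 * k := ⟨7 * k - 1, by omega⟩
    obtain ⟨Ff, hFf⟩ : ∃ Ff, Ff + 1 = 5 * (k + k) * t (k + k + 1) := by
      refine ⟨5 * (k + k) * t (k + k + 1) - 1, ?_⟩
      have : 0 < 5 * (k + k) * t (k + k + 1) := Nat.mul_pos (by omega) (by omega)
      omega
    have hFfeq : 5 * (k + k) * t (k + k + 1) - 1 = Ff := by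
      have h := hFf
      generalize 5 * (k + k) * t (k + k + 1) = G at h ⊢
      omega
    rw [hFfeq]
    have h20 : 20 * t (k + k + 1) ≤ 5 * (k + k) * t (k + k + 1) :=
      Nat.mul_le_mul_right _ (by omega)
    have h20b : 20 * (k + 1) ≤ 20 * t (k + k + 1) := Nat.mul_le_mul_left _ hTlb
    have h7b : 7 * (2 * k + 1) ≤ 7 * t (k + k + 1) := Nat.mul_le_mul_left _ hT2
    have hPQ : (k + 1) * (2 * k + 1) = t (k + k + 1) := hb.symm
    have hαQ : 1 * (2 * k + 1) = (k + k) + 1 := by omega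
    have hβP : 2 * (k + 1) = (k + k) + 2 := by omega
    have hcop : Nat.Coprime (k + 1) (2 * k + 1) := by
      have d1 := Nat.gcd_dvd_left (k + 1) (2 * k + 1)
      have d2 := Nat.gcd_dvd_right (k + 1) (2 * k + 1)
      have hd : Nat.gcd (k + 1) (2 * k + 1) ∣ 2 * (k + 1) - (2 * k + 1) :=
        Nat.dvd_sub (d1.mul_left 2) d2
      have e : 2 * (k + 1) - (2 * k + 1) = 1 := by omega
      rw [e] at hd
      exact Nat.dvd_one.mp hd
    have hM' : (M : ℤ) + 1 = 7 * (k : ℤ) := by exact_mod_cast hM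
    have hFf'' : (Ff : ℤ) + 1 = 5 * ((k : ℤ) + k) * (((k : ℤ) + 1) * (2 * (k : ℤ) + 1)) := by
      have h := hFf
      rw [hb] at h
      exact_mod_cast h
    have hF : M * t (k + k + 1) + k * t (k + k) + (2 * k) * t (k + k + 2) = Ff := by
      have hZ : (M : ℤ) * (((k : ℤ) + 1) * (2 * (k : ℤ) + 1))
          + (k : ℤ) * ((k : ℤ) * (2 * (k : ℤ) + 1))
          + (2 * (k : ℤ)) * (((k : ℤ) + 1) * (2 * (k : ℤ) + 3)) = Ff := by
        linear_combination (((k : ℤ) + 1) * (2 * (k : ℤ) + 1)) * hM' - hFf''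
      have hN : M * ((k + 1) * (2 * k + 1)) + k * (k * (2 * k + 1))
          + (2 * k) * ((k + 1) * (2 * k + 3)) = Ff := by exact_mod_cast hZ
      rw [ha, hb, hc]
      exact hN
    have hPF : 8 * (k + 1) ≤ Ff := by omega
    have hQF : 7 * (2 * k + 1) ≤ Ff := by omega
    have hαb : 8 * (1 * t (k + k + 1)) ≤ Ff := by omega
    have hb2 : 2 ≤ t (k + k + 1) := by omega
    have hFb : t (k + k + 1) ∣ Ff + 1 := ⟨10 * k, by rw [hFf]; ring⟩
    constructor
    · apply upperAux (k + k) (t (k + k)) (t (k + k + 1)) (t (k + k + 2))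
        (k + 1) (2 * k + 1) 1 2 M Ff k (2 * k) h1 h2 hPQ hαQ hβP rfl rfl hF hFb
        (by omega) pairsE16 (by decide)
      intro i j hcon
      have e : i * (k + 1) + j * ((2 * k + 1) + 2) = i * k + i + 2 * (j * k) + 3 * j := by ring
      rw [e] at hcon
      have e2 : i * 1 = i := by ring
      rw [e2] at hcon
      have hi : i ≤ 6 := by
        by_contra hgt
        push_neg at hgt
        have : 7 * k ≤ i * k := Nat.mul_le_mul_right k (by omega)
        linarith [Nat.zero_le (j * k), Nat.zero_le (i * k), Nat.zero_le i, Nat.zero_le j]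
      have hj : j ≤ 3 := by
        by_contra hgt
        push_neg at hgt
        have : 4 * k ≤ j * k := Nat.mul_le_mul_right k (by omega)
        linarith [Nat.zero_le (j * k), Nat.zero_le (i * k), Nat.zero_le i, Nat.zero_le j]
      interval_cases i <;> interval_cases j <;>
        first
          | decide
          | (exfalso; omega)
    · intro m hm
      apply lowerAux (k + k) (t (k + k)) (t (k + k + 1)) (t (k + k + 2))
        (k + 1) (2 * k + 1) 1 2 M Ff k (2 * k) h1 h2 hPQ hαQ hβP rfl rfl hcop hF
        hPF hQF hαb hb2 pairsE17 (by decide) ?_ m hm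
      intro pr hpr
      fin_cases hpr <;> exact ⟨by omega, by omega, by omega⟩
  · -- n odd, n = 2k+1 with k ≥ 8
    obtain ⟨k, hk⟩ := ho
    have hk8 : 8 ≤ k := by omega
    subst hk
    have eIdx1 : 2 * k + 1 + 1 = 2 * k + 2 := by omega
    have eIdx2 : 2 * k + 1 + 2 = 2 * k + 3 := by omega
    rw [eIdx1, eIdx2]
    have h1 : t (2 * k + 1) + ((2 * k + 1) + 1) = t (2 * k + 2) := by
      have h := t_step (2 * k + 1)
      rw [eIdx1] at h
      omega
    have h2 : t (2 * k + 2) + ((2 * k + 1) + 2) = t (2 * k + 3) := by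
      have h := t_step (2 * k + 2)
      have e : 2 * k + 2 + 1 = 2 * k + 3 := by omega
      rw [e] at h
      omega
    have ha : t (2 * k + 1) = (2 * k + 1) * (k + 1) := by
      have h := two_t (2 * k + 1)
      have e : (2 * k + 1) * (2 * k + 1 + 1) = 2 * ((2 * k + 1) * (k + 1)) := by ring
      linarith
    have hb : t (2 * k + 2) = (k + 1) * (2 * k + 3) := by
      have h := two_t (2 * k + 2)
      have e : (2 * k + 2) * (2 * k + 2 + 1) = 2 * ((k + 1) * (2 * k + 3)) := by ring
      linarith
    have hc : t (2 * k + 3) = (2 * k + 3) * (k + 2) := by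
      have h := two_t (2 * k + 3)
      have e : (2 * k + 3) * (2 * k + 3 + 1) = 2 * ((2 * k + 3) * (k + 2)) := by ring
      linarith
    have hTlb : k + 1 ≤ t (2 * k + 2) := by
      rw [hb]
      have h := Nat.mul_le_mul (le_refl (k + 1)) (show 1 ≤ 2 * k + 3 by omega)
      linarith
    have hT2 : 2 * k + 3 ≤ t (2 * k + 2) := by
      rw [hb]
      have h := Nat.mul_le_mul (show 1 ≤ k + 1 by omega) (le_refl (2 * k + 3))
      linarith
    obtain ⟨Ff, hFf⟩ : ∃ Ff, Ff + 1 = 5 * (2 * k + 1) * t (2 * k + 2) := by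
      refine ⟨5 * (2 * k + 1) * t (2 * k + 2) - 1, ?_⟩
      have : 0 < 5 * (2 * k + 1) * t (2 * k + 2) := Nat.mul_pos (by omega) (by omega)
      omega
    have hFfeq : 5 * (2 * k + 1) * t (2 * k + 2) - 1 = Ff := by
      have h := hFf
      generalize 5 * (2 * k + 1) * t (2 * k + 2) = G at h ⊢
      omega
    rw [hFfeq]
    have h85 : 85 * t (2 * k + 2) ≤ 5 * (2 * k + 1) * t (2 * k + 2) :=
      Nat.mul_le_mul_right _ (by omega)
    have h8b : 8 * (2 * k + 3) ≤ 8 * t (2 * k + 2) := Nat.mul_le_mul_left _ hT2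
    have h7b : 7 * (k + 1) ≤ 7 * t (2 * k + 2) := Nat.mul_le_mul_left _ hTlb
    have hPQ : (2 * k + 3) * (k + 1) = t (2 * k + 2) := by rw [hb]; ring
    have hαQ : 2 * (k + 1) = (2 * k + 1) + 1 := by omega
    have hβP : 1 * (2 * k + 3) = (2 * k + 1) + 2 := by omega
    have hcop : Nat.Coprime (2 * k + 3) (k + 1) := by
      have d1 := Nat.gcd_dvd_left (2 * k + 3) (k + 1)
      have d2 := Nat.gcd_dvd_right (2 * k + 3) (k + 1)
      have hd : Nat.gcd (2 * k + 3) (k + 1) ∣ (2 * k + 3) - 2 * (k + 1) :=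
        Nat.dvd_sub d1 (d2.mul_left 2)
      have e : (2 * k + 3) - 2 * (k + 1) = 1 := by omega
      rw [e] at hd
      exact Nat.dvd_one.mp hd
    have hFf'' : (Ff : ℤ) + 1 = 5 * (2 * (k : ℤ) + 1) * (((k : ℤ) + 1) * (2 * (k : ℤ) + 3)) := by
      have h := hFf
      rw [hb] at h
      exact_mod_cast h
    have hF : (7 * k + 4) * t (2 * k + 2) + (2 * k + 2) * t (2 * k + 1)
        + k * t (2 * k + 3) = Ff := by
      have hZ : (7 * (k : ℤ) + 4) * (((k : ℤ) + 1) * (2 * (k : ℤ) + 3))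
          + (2 * (k : ℤ) + 2) * ((2 * (k : ℤ) + 1) * ((k : ℤ) + 1))
          + (k : ℤ) * ((2 * (k : ℤ) + 3) * ((k : ℤ) + 2)) = Ff := by
        linear_combination -hFf''
      have hN : (7 * k + 4) * ((k + 1) * (2 * k + 3)) + (2 * k + 2) * ((2 * k + 1) * (k + 1))
          + k * ((2 * k + 3) * (k + 2)) = Ff := by exact_mod_cast hZ
      rw [ha, hb, hc]
      exact hN
    have hPF : 8 * (2 * k + 3) ≤ Ff := by omega
    have hQF : 7 * (k + 1) ≤ Ff := by omega
    have hαb : 8 * (2 * t (2 * k + 2)) ≤ Ff := by omega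
    have hb2 : 2 ≤ t (2 * k + 2) := by omega
    have hFb : t (2 * k + 2) ∣ Ff + 1 := ⟨5 * (2 * k + 1), by rw [hFf]; ring⟩
    constructor
    · apply upperAux (2 * k + 1) (t (2 * k + 1)) (t (2 * k + 2)) (t (2 * k + 3))
        (2 * k + 3) (k + 1) 2 1 (7 * k + 4) Ff (2 * k + 2) k h1 h2 hPQ hαQ hβP rfl rfl hF hFb
        (by omega) pairsO16 (by decide)
      intro i j hcon
      have e : i * (2 * k + 3) + j * ((k + 1) + 1) = 2 * (i * k) + 3 * i + j * k + 2 * j := by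
        ring
      rw [e] at hcon
      have e2 : i * 2 = 2 * i := by ring
      rw [e2] at hcon
      have hi : i ≤ 3 := by
        by_contra hgt
        push_neg at hgt
        have : 4 * k ≤ i * k := Nat.mul_le_mul_right k (by omega)
        linarith [Nat.zero_le (j * k), Nat.zero_le (i * k), Nat.zero_le i, Nat.zero_le j]
      have hj : j ≤ 6 := by
        by_contra hgt
        push_neg at hgt
        have : 7 * k ≤ j * k := Nat.mul_le_mul_right k (by omega)
        linarith [Nat.zero_le (j * k), Nat.zero_le (i * k), Nat.zero_le i, Nat.zero_le j]
      interval_cases i <;> interval_cases j <;>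
        first
          | decide
          | (exfalso; omega)
    · intro m hm
      apply lowerAux (2 * k + 1) (t (2 * k + 1)) (t (2 * k + 2)) (t (2 * k + 3))
        (2 * k + 3) (k + 1) 2 1 (7 * k + 4) Ff (2 * k + 2) k h1 h2 hPQ hαQ hβP rfl rfl hcop hF
        hPF hQF hαb hb2 pairsO17 (by decide) ?_ m hm
      intro pr hpr
      fin_cases hpr <;> exact ⟨by omega, by omega, by omega⟩

/-- `g(t_n, t_{n+1}, t_{n+2}; 16) = ((n+1)(n+2)/4)(10n) - 1` for `n = 17` and for
every integer `n ≥ 19`. -/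
theorem stmt_19 (n : ℕ) (hn : n = 17 ∨ 19 ≤ n) :
    genFrob ![t n, t (n + 1), t (n + 2)] 16 =
      ((n : ℤ) + 1) * ((n : ℤ) + 2) * (10 * (n : ℤ)) / 4 - 1 := by
  obtain ⟨hub, hlb⟩ := keyBounds n hn
  set A := ![t n, t (n + 1), t (n + 2)] with hA
  set F : ℕ := 5 * n * t (n + 1) - 1 with hFdef
  have h2t1 := two_t (n + 1)
  have htpos : 1 ≤ t (n + 1) := by nlinarith [h2t1]
  have hFN : F + 1 = 5 * n * t (n + 1) := by
    have hx : 0 < 5 * n * t (n + 1) := Nat.mul_pos (by omega) htpos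
    rw [hFdef]
    generalize 5 * n * t (n + 1) = G at hx ⊢
    omega
  have hgreat : IsGreatest {m : ℤ | repCountZ A m ≤ 16} (F : ℤ) := by
    constructor
    · show repCountZ A (F : ℤ) ≤ 16
      unfold repCountZ
      rw [if_pos (by positivity)]
      simpa using hub
    · intro m hmS
      by_contra hgt
      push_neg at hgt
      have hm0 : (0 : ℤ) ≤ m := le_trans (by positivity) hgt.le
      have hmv : repCountZ A m = repCount A m.toNat := by
        unfold repCountZ
        rw [if_pos hm0]
      have hFm : F < m.toNat := by
        have h := Int.toNat_of_nonneg hm0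
        have : (F : ℤ) < (m.toNat : ℤ) := by rw [h]; exact hgt
        exact_mod_cast this
      have h17 := hlb m.toNat hFm
      rw [Set.mem_setOf_eq, hmv] at hmS
      omega
  have hsup : genFrob A 16 = (F : ℤ) := hgreat.csSup_eq
  rw [hsup]
  have h2t' : (2 : ℤ) * ((t (n + 1) : ℕ) : ℤ) = ((n : ℤ) + 1) * ((n : ℤ) + 2) := by
    exact_mod_cast h2t1
  have hprod : ((n : ℤ) + 1) * ((n : ℤ) + 2) * (10 * (n : ℤ))
      = 4 * (5 * (n : ℤ) * ((t (n + 1) : ℕ) : ℤ)) := by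
    linear_combination (-(10 * (n : ℤ))) * h2t'
  rw [hprod, Int.mul_ediv_cancel_left _ (by norm_num)]
  have hFcast : ((F : ℕ) : ℤ) = 5 * (n : ℤ) * ((t (n + 1) : ℕ) : ℤ) - 1 := by
    have : ((F : ℕ) : ℤ) + 1 = 5 * (n : ℤ) * ((t (n + 1) : ℕ) : ℤ) := by
      exact_mod_cast hFN
    linarith
  rw [hFcast]
end
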